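/- arXiv:0710.5419 — 7 statements merged into one kernel-verified Lean document; each statement's English description precedes it below -/
import Mathlib

section
/- Let X be a real random variable with the centered Gaussian distribution N(0, v) for some variance v > 0. Then E(ln|X|) = (1/2)(ln v − ln 2 − γ), where γ is the Euler–Mascheroni constant. Equivalently, ∫_ℝ ln|x| dN(0,v)(x) = (ln v − ln 2 − γ)/2. -/
open MeasureTheory Set Filter Asymptotics Real Topology
open scoped ENNReal NNReal

lemma mellin_log_exp_half :
    MellinConvergent (fun t : ℝ => Real.log t • ((rexp (-t)) : ℂ)) (1/2) ∧
      HasDerivAt (mellin fun x : ℝ => ((rexp (-x)) : ℂ))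
        (mellin (fun t : ℝ => Real.log t • ((rexp (-t)) : ℂ)) (1/2)) (1/2) := by
  refine mellin_hasDerivAt_of_isBigO_rpow (a := 1) (b := 0) ?_ ?_ ?_ ?_ ?_
  · refine (Continuous.continuousOn ?_).locallyIntegrableOn measurableSet_Ioi
    exact Complex.continuous_ofReal.comp (Real.continuous_exp.comp continuous_neg)
  · rw [← isBigO_norm_left]
    simp_rw [Complex.norm_real, isBigO_norm_left]
    simpa only [neg_one_mul] using (isLittleO_exp_neg_mul_rpow_atTop zero_lt_one _).isBigO
  · rw [show ((1:ℂ)/2) = ((1/2 : ℝ) : ℂ) by norm_num, Complex.ofReal_re]; norm_num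
  · simp_rw [neg_zero, rpow_zero]
    refine isBigO_const_of_tendsto (?_ : Tendsto _ _ (𝓝 (1 : ℂ))) one_ne_zero
    rw [(by simp : (1 : ℂ) = Real.exp (-0))]
    exact (Complex.continuous_ofReal.comp (Real.continuous_exp.comp continuous_neg)).continuousWithinAt
  · rw [show ((1:ℂ)/2) = ((1/2 : ℝ) : ℂ) by norm_num, Complex.ofReal_re]; norm_num

lemma gamma_half_deriv_integral :
    IntegrableOn (fun t : ℝ => t ^ (-(2⁻¹:ℝ)) * (Real.log t * rexp (-t))) (Ioi 0) ∧
    ∫ t in Ioi 0, t ^ (-(2⁻¹:ℝ)) * (Real.log t * rexp (-t))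
      = -√π * (eulerMascheroniConstant + 2 * Real.log 2) := by
  obtain ⟨hconv, hderiv⟩ := mellin_log_exp_half
  have key : EqOn (fun t : ℝ => (t:ℂ) ^ ((1:ℂ)/2 - 1) • (Real.log t • ((rexp (-t)) : ℂ)))
      (fun t : ℝ => ((t ^ (-(2⁻¹:ℝ)) * (Real.log t * rexp (-t)) : ℝ) : ℂ)) (Ioi 0) := by
    intro t ht
    have h1 : ((t:ℂ)) ^ ((1:ℂ)/2 - 1) = ((t ^ (-(2⁻¹:ℝ)) : ℝ) : ℂ) := by
      rw [show ((1:ℂ)/2 - 1) = ((-(2⁻¹:ℝ) : ℝ) : ℂ) by push_cast; ring,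
        Complex.ofReal_cpow (le_of_lt ht)]
    simp only [h1, smul_eq_mul, Complex.real_smul]
    push_cast
    ring
  have hint : IntegrableOn (fun t : ℝ => t ^ (-(2⁻¹:ℝ)) * (Real.log t * rexp (-t))) (Ioi 0) := by
    have hconv' : IntegrableOn (fun t : ℝ => (t:ℂ) ^ ((1:ℂ)/2 - 1) • (Real.log t • ((rexp (-t)) : ℂ))) (Ioi 0) := hconv
    have h2 := (hconv'.congr_fun key measurableSet_Ioi).re
    exact h2.congr (ae_of_all _ fun t => Complex.ofReal_re _)
  refine ⟨hint, ?_⟩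
  have hDval : mellin (fun t : ℝ => Real.log t • ((rexp (-t)) : ℂ)) (1/2)
      = ((∫ t in Ioi 0, t ^ (-(2⁻¹:ℝ)) * (Real.log t * rexp (-t)) : ℝ) : ℂ) := by
    rw [mellin, setIntegral_congr_fun measurableSet_Ioi key]
    exact integral_ofReal
  -- derivative of Complex.Gamma at 1/2
  have hGI : HasDerivAt Complex.GammaIntegral
      (mellin (fun t : ℝ => Real.log t • ((rexp (-t)) : ℂ)) (1/2)) (1/2) := by
    rw [Complex.GammaIntegral_eq_mellin]; exact hderiv
  have hev : Complex.Gamma =ᶠ[nhds ((1:ℂ)/2)] Complex.GammaIntegral := by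
    have hopen : IsOpen {s : ℂ | 0 < s.re} := isOpen_lt continuous_const Complex.continuous_re
    have hmem : ((1:ℂ)/2) ∈ {s : ℂ | 0 < s.re} := by
      simp only [Set.mem_setOf_eq]
      rw [show ((1:ℂ)/2) = ((1/2 : ℝ) : ℂ) by push_cast; ring, Complex.ofReal_re]; norm_num
    filter_upwards [hopen.mem_nhds hmem] with s hs
    exact Complex.Gamma_eq_integral hs
  have hG : HasDerivAt Complex.Gamma
      (mellin (fun t : ℝ => Real.log t • ((rexp (-t)) : ℂ)) (1/2)) (((1:ℝ)/2 : ℝ) : ℂ) := by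
    rw [show (((1:ℝ)/2 : ℝ) : ℂ) = (1:ℂ)/2 by push_cast; ring]
    exact hGI.congr_of_eventuallyEq hev
  have hR : HasDerivAt Real.Gamma
      (mellin (fun t : ℝ => Real.log t • ((rexp (-t)) : ℂ)) (1/2)).re ((1:ℝ)/2) :=
    hG.real_of_complex
  have := hR.unique Real.hasDerivAt_Gamma_one_half
  rw [hDval, Complex.ofReal_re] at this
  exact this

lemma gamma_half_integral :
    IntegrableOn (fun t : ℝ => rexp (-t) * t ^ (-(2⁻¹:ℝ))) (Ioi 0) ∧
    ∫ t in Ioi 0, rexp (-t) * t ^ (-(2⁻¹:ℝ)) = √π := by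
  have h : (-(2⁻¹:ℝ)) = (1/2 : ℝ) - 1 := by norm_num
  constructor
  · rw [h]; exact Real.GammaIntegral_convergent (by norm_num)
  · rw [h, ← Real.Gamma_eq_integral (by norm_num : (0:ℝ) < 1/2), Real.Gamma_one_half_eq]

open MeasureTheory ProbabilityTheory Real

/-- If `X ~ N(0, v)` with `v > 0`, then `E(ln |X|) = (ln v - ln 2 - γ)/2`. -/
theorem expectation_log_abs_gaussian (v : NNReal) (hv : 0 < v) :
    ∫ x, Real.log |x| ∂(gaussianReal 0 v)
      = (Real.log v - Real.log 2 - Real.eulerMascheroniConstant) / 2 := by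
  obtain ⟨hK2i, hK2⟩ := gamma_half_deriv_integral
  obtain ⟨hK1i, hK1⟩ := gamma_half_integral
  have hvR : (0:ℝ) < v := hv
  have h2v : (0:ℝ) < 2 * v := by linarith
  have hπ : (0:ℝ) < π := Real.pi_pos
  have hsp : (0:ℝ) < Real.sqrt π := Real.sqrt_pos.mpr hπ
  have hs2 : (0:ℝ) < Real.sqrt (2*(v:ℝ)) := Real.sqrt_pos.mpr h2v
  have hs : Real.sqrt (2*π*(v:ℝ)) = Real.sqrt (2*(v:ℝ)) * Real.sqrt π := by
    rw [show 2*π*(v:ℝ) = (2*(v:ℝ))*π by ring, Real.sqrt_mul h2v.le]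
  have hss : Real.sqrt (2*(v:ℝ)) * Real.sqrt (2*(v:ℝ)) = 2*(v:ℝ) := Real.mul_self_sqrt h2v.le
  have hlog : Real.log (2*(v:ℝ)) = Real.log 2 + Real.log (v:ℝ) :=
    Real.log_mul two_ne_zero hvR.ne'
  set c : ℝ := (Real.sqrt (2 * π * v))⁻¹ with hc
  set c'' : ℝ := (2 * Real.sqrt (2*v))⁻¹ * c with hc''
  set a : ℝ := c'' * (Real.log (2*v) / 2) with ha
  set b : ℝ := c'' / 2 with hb
  set g : ℝ → ℝ := fun y => (2 * Real.sqrt y)⁻¹ *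
    (gaussianPDFReal 0 v (Real.sqrt y) * Real.log (Real.sqrt y)) with hg
  have step1 : ∫ x, Real.log |x| ∂(gaussianReal 0 v)
      = ∫ x, gaussianPDFReal 0 v x * Real.log |x| := by
    rw [gaussianReal_of_var_ne_zero 0 hv.ne']
    rw [show gaussianPDF 0 v
        = fun x => ((Real.toNNReal (gaussianPDFReal 0 v x) : ℝ≥0) : ℝ≥0∞) from rfl]
    rw [integral_withDensity_eq_integral_smul ((measurable_gaussianPDFReal 0 v).real_toNNReal)]
    congr 1; funext x
    rw [NNReal.smul_def, smul_eq_mul, Real.coe_toNNReal _ (gaussianPDFReal_nonneg 0 v x)]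
  have step2 : ∫ x, gaussianPDFReal 0 v x * Real.log |x|
      = 2 * ∫ x in Ioi 0, gaussianPDFReal 0 v x * Real.log x := by
    rw [← integral_comp_abs (f := fun x => gaussianPDFReal 0 v x * Real.log x)]
    congr 1; funext x
    simp [gaussianPDFReal, sq_abs]
  have step3 : ∫ x in Ioi 0, gaussianPDFReal 0 v x * Real.log x = ∫ y in Ioi 0, g y := by
    rw [← integral_comp_rpow_Ioi_of_pos (g := g) two_pos]
    refine setIntegral_congr_fun measurableSet_Ioi fun x hx => ?_
    have hx0 : (0:ℝ) < x := hx
    have h1 : x ^ ((2:ℝ) - 1) = x := by norm_num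
    have h2 : x ^ (2:ℝ) = x ^ (2:ℕ) := by
      rw [← Real.rpow_natCast]; norm_num
    simp only [hg, h1, h2, Real.sqrt_sq hx0.le, smul_eq_mul]
    rw [← mul_assoc, mul_inv_cancel₀ (by positivity), one_mul]
  have step4 : ∫ y in Ioi 0, g y = (2*v) * ∫ t in Ioi 0, g ((2*v) * t) := by
    rw [integral_comp_mul_left_Ioi g 0 h2v, mul_zero, smul_eq_mul, ← mul_assoc,
      mul_inv_cancel₀ h2v.ne', one_mul]
  have step5 : ∫ t in Ioi 0, g ((2*v) * t)
      = ∫ t in Ioi 0, (a * (rexp (-t) * t ^ (-(2⁻¹:ℝ)))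
          + b * (t ^ (-(2⁻¹:ℝ)) * (Real.log t * rexp (-t)))) := by
    refine setIntegral_congr_fun measurableSet_Ioi fun t ht => ?_
    have ht0 : (0:ℝ) < t := ht
    have hst : (0:ℝ) < Real.sqrt t := Real.sqrt_pos.mpr ht0
    have e3 : -(Real.sqrt (2*(v:ℝ)*t) - 0)^2 / (2*(v:ℝ)) = -t := by
      rw [sub_zero, Real.sq_sqrt (by positivity), neg_div,
        mul_div_cancel_left₀ _ h2v.ne']
    have e2 : Real.log (Real.sqrt (2*(v:ℝ)*t)) = (Real.log (2*(v:ℝ)) + Real.log t)/2 := by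
      rw [Real.log_sqrt (by positivity), Real.log_mul h2v.ne' ht0.ne']
    have e1 : Real.sqrt (2*(v:ℝ)*t) = Real.sqrt (2*(v:ℝ)) * Real.sqrt t :=
      Real.sqrt_mul h2v.le t
    have e4 : t ^ (-(2⁻¹:ℝ)) = (Real.sqrt t)⁻¹ := by
      rw [Real.sqrt_eq_rpow, ← Real.rpow_neg ht0.le]
      norm_num
    simp only [hg, gaussianPDFReal]
    rw [e3, e2, e1, ha, hb, hc'', hc, hs, e4]
    ring
  have step6 : ∫ t in Ioi 0, (a * (rexp (-t) * t ^ (-(2⁻¹:ℝ)))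
          + b * (t ^ (-(2⁻¹:ℝ)) * (Real.log t * rexp (-t))))
      = a * Real.sqrt π + b * (-√π * (eulerMascheroniConstant + 2 * Real.log 2)) := by
    rw [integral_add (hK1i.const_mul a) (hK2i.const_mul b), integral_const_mul,
      integral_const_mul, hK1, hK2]
  rw [step1, step2, step3, step4, step5, step6]
  have hcval : c'' = (2*(2*(v:ℝ))*Real.sqrt π)⁻¹ := by
    rw [hc'', hc, hs, ← mul_inv,
      show (2*Real.sqrt (2*(v:ℝ)))*(Real.sqrt (2*(v:ℝ))*Real.sqrt π)
        = 2*(Real.sqrt (2*(v:ℝ))*Real.sqrt (2*(v:ℝ)))*Real.sqrt π from by ring, hss]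
  rw [ha, hb, hlog, hcval]
  field_simp
  ring
end

section
/- Let X be a real random variable with the centered Gaussian distribution N(0, v) for some variance v > 0, and let m_v = (1/2)(ln v − ln 2 − γ). Then Var(ln|X|) = π²/8, i.e., ∫_ℝ (ln|x| − m_v)² dN(0,v)(x) = π²/8. In particular the variance does not depend on v. -/
open MeasureTheory ProbabilityTheory Real Set Filter Asymptotics
open scoped Topology ComplexConjugate ENNReal NNReal

noncomputable section



/-- The integrand family: `(log t)^k * exp (-t)` as a complex-valued function. -/
def fk (k : ℕ) (t : ℝ) : ℂ := ((Real.log t) ^ k * Real.exp (-t) : ℝ)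

lemma fk_succ (k : ℕ) : (fun t : ℝ => Real.log t • fk k t) = fk (k + 1) := by
  funext t
  simp only [fk, Complex.real_smul, ← Complex.ofReal_mul]
  norm_cast
  ring

lemma fk_locInt (k : ℕ) : LocallyIntegrableOn (fk k) (Ioi 0) := by
  refine (ContinuousOn.locallyIntegrableOn ?_ measurableSet_Ioi)
  refine Complex.continuous_ofReal.comp_continuousOn (ContinuousOn.mul ?_ ?_)
  · exact (Real.continuousOn_log.mono (fun t ht => ne_of_gt ht)).pow k
  · exact (Real.continuous_exp.comp continuous_neg).continuousOn

lemma fk_zero_top : fk 0 =O[atTop] (fun t : ℝ => t ^ (-2 : ℝ)) := by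
  rw [← isBigO_norm_left]
  simp only [fk, pow_zero, one_mul, Complex.norm_real, Real.norm_eq_abs, ← Real.norm_eq_abs,
    isBigO_norm_left]
  simpa only [neg_one_mul] using (isLittleO_exp_neg_mul_rpow_atTop zero_lt_one _).isBigO

lemma fk_zero_bot : fk 0 =O[𝓝[>] 0] (fun t : ℝ => t ^ (-(0:ℝ)) : ℝ → ℝ) := by
  simp_rw [neg_zero, Real.rpow_zero]
  refine isBigO_const_of_tendsto (?_ : Tendsto _ _ (𝓝 (1 : ℂ))) one_ne_zero
  have : Continuous (fk 0) := by
    refine Complex.continuous_ofReal.comp ?_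
    continuity
  have h0 : fk 0 0 = 1 := by simp [fk]
  simpa [h0] using (this.continuousAt (x := (0:ℝ))).tendsto.mono_left nhdsWithin_le_nhds

lemma rpow_isBigO_rpow_atTop {a b : ℝ} (hab : a ≤ b) :
    (fun t : ℝ => t ^ a) =O[atTop] (fun t : ℝ => t ^ b) := by
  refine IsBigO.of_bound 1 ?_
  filter_upwards [eventually_ge_atTop (1:ℝ)] with t ht
  rw [one_mul, Real.norm_eq_abs, Real.norm_eq_abs, abs_of_nonneg (rpow_nonneg (by linarith) _),
    abs_of_nonneg (rpow_nonneg (by linarith) _)]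
  exact Real.rpow_le_rpow_of_exponent_le ht hab

lemma rpow_isBigO_rpow_zero {a b : ℝ} (hab : b ≤ a) :
    (fun t : ℝ => t ^ a) =O[𝓝[>] (0:ℝ)] (fun t : ℝ => t ^ b) := by
  refine IsBigO.of_bound 1 ?_
  filter_upwards [Ioo_mem_nhdsGT_of_mem (by norm_num : (0 : ℝ) ∈ Ico (0:ℝ) 1)] with t ht
  rw [one_mul, Real.norm_eq_abs, Real.norm_eq_abs, abs_of_nonneg (rpow_nonneg ht.1.le _),
    abs_of_nonneg (rpow_nonneg ht.1.le _)]
  exact Real.rpow_le_rpow_of_exponent_ge ht.1 ht.2.le hab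

lemma fk_top (k : ℕ) (hk : k ≤ 2) : fk k =O[atTop] (fun t : ℝ => t ^ (-1 : ℝ)) := by
  interval_cases k
  · exact fk_zero_top.trans (rpow_isBigO_rpow_atTop (by norm_num))
  · rw [← fk_succ]
    exact isBigO_rpow_top_log_smul (by norm_num : (1:ℝ) < 2) fk_zero_top
  · rw [← fk_succ, ← fk_succ]
    exact isBigO_rpow_top_log_smul (by norm_num : (1:ℝ) < 3/2)
      (isBigO_rpow_top_log_smul (by norm_num : (3/2:ℝ) < 2) fk_zero_top)

lemma fk_bot (k : ℕ) (hk : k ≤ 2) : fk k =O[𝓝[>] 0] (fun t : ℝ => t ^ (-(4⁻¹) : ℝ)) := by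
  have h1 : fk 1 =O[𝓝[>] 0] (fun t : ℝ => t ^ (-(8⁻¹:ℝ)) : ℝ → ℝ) := by
    rw [← fk_succ]
    exact isBigO_rpow_zero_log_smul (by norm_num : (0:ℝ) < 8⁻¹) (by simpa using fk_zero_bot)
  interval_cases k
  · exact (by simpa using fk_zero_bot : fk 0 =O[𝓝[>] 0] (fun t : ℝ => t ^ (-(0:ℝ)))).trans
      (rpow_isBigO_rpow_zero (by norm_num))
  · exact h1.trans (rpow_isBigO_rpow_zero (by norm_num))
  · rw [← fk_succ]
    exact isBigO_rpow_zero_log_smul (by norm_num : (8⁻¹:ℝ) < 4⁻¹) h1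


lemma hasDerivAt_mellin_fk {k : ℕ} (hk : k ≤ 1) {s : ℂ} (hs : 4⁻¹ < s.re) (hs' : s.re < 1) :
    HasDerivAt (mellin (fk k)) (mellin (fk (k + 1)) s) s := by
  have := (mellin_hasDerivAt_of_isBigO_rpow (E := ℂ) (fk_locInt k) (fk_top k (by omega))
    hs' (fk_bot k (by omega)) hs).2
  rwa [fk_succ] at this

lemma gamma_eq_mellin {s : ℂ} (hs : 0 < s.re) : Complex.Gamma s = mellin (fk 0) s := by
  rw [Complex.Gamma_eq_integral hs, Complex.GammaIntegral_eq_mellin]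
  refine congrFun (congrArg _ (funext fun t => ?_)) s
  simp only [fk, pow_zero, one_mul]

lemma deriv_gamma_eventually : deriv Complex.Gamma =ᶠ[𝓝 (1/2 : ℂ)] mellin (fk 1) := by
  have hU : {z : ℂ | 4⁻¹ < z.re ∧ z.re < 1} ∈ 𝓝 (1/2 : ℂ) := by
    refine IsOpen.mem_nhds ?_ (by norm_num)
    exact (isOpen_lt continuous_const Complex.continuous_re).inter
      (isOpen_lt Complex.continuous_re continuous_const)
  filter_upwards [hU] with z hz
  have h1 : Complex.Gamma =ᶠ[𝓝 z] mellin (fk 0) := by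
    have : {w : ℂ | 0 < w.re} ∈ 𝓝 z :=
      IsOpen.mem_nhds (isOpen_lt continuous_const Complex.continuous_re) (by
        simpa using lt_trans (by norm_num) hz.1)
    filter_upwards [this] with w hw using gamma_eq_mellin hw
  rw [h1.deriv_eq]
  exact (hasDerivAt_mellin_fk (Nat.zero_le 1) hz.1 hz.2).deriv

lemma hasDerivAt_deriv_gamma :
    HasDerivAt (deriv Complex.Gamma) (mellin (fk 2) (1/2)) (1/2 : ℂ) :=
  (hasDerivAt_mellin_fk le_rfl (by norm_num) (by norm_num)).congr_of_eventuallyEq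
    deriv_gamma_eventually

lemma deriv_gamma_half_mellin : deriv Complex.Gamma (1/2) = mellin (fk 1) (1/2) :=
  deriv_gamma_eventually.self_of_nhds


lemma gamma_diff_half : DifferentiableAt ℂ Complex.Gamma (1/2) := by
  refine Complex.differentiableAt_Gamma _ (fun m => ?_)
  intro h
  have : ((1:ℂ)/2).re = (-(m:ℂ)).re := by rw [← h]
  simp only [Complex.neg_re, Complex.natCast_re] at this
  norm_num at this
  nlinarith [Nat.cast_nonneg (α := ℝ) m]

lemma hasDerivAt_gamma_half_coe :
    HasDerivAt Complex.Gamma (deriv Complex.Gamma (1/2)) (((1:ℝ)/2 : ℝ) : ℂ) := by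
  have : (((1:ℝ)/2 : ℝ) : ℂ) = 1/2 := by norm_num
  rw [this]
  exact gamma_diff_half.hasDerivAt

lemma deriv_gamma_half_im : (deriv Complex.Gamma (1/2)).im = 0 := by
  have h := hasDerivAt_gamma_half_coe.comp_ofReal
  have h2 : HasDerivAt (fun x : ℝ => (Complex.Gamma (x : ℂ)).im)
      ((deriv Complex.Gamma (1/2)).im) ((1:ℝ)/2) :=
    (Complex.imCLM.hasFDerivAt.comp_hasDerivAt _ h)
  have h3 : HasDerivAt (fun x : ℝ => (Complex.Gamma (x : ℂ)).im) 0 ((1:ℝ)/2) := by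
    refine (hasDerivAt_const _ (0:ℝ)).congr_of_eventuallyEq (Eventually.of_forall fun x => ?_)
    show (Complex.Gamma (x : ℂ)).im = 0
    rw [Complex.Gamma_ofReal, Complex.ofReal_im]
  exact h2.unique h3

lemma deriv_gamma_half_re :
    (deriv Complex.Gamma (1/2)).re
      = -Real.sqrt π * (Real.eulerMascheroniConstant + 2 * Real.log 2) := by
  have h2 : HasDerivAt Real.Gamma ((deriv Complex.Gamma (1/2)).re) ((1:ℝ)/2) := by
    refine hasDerivAt_gamma_half_coe.real_of_complex.congr_of_eventuallyEq
      (Eventually.of_forall fun x => ?_)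
    show Real.Gamma x = (Complex.Gamma (x : ℂ)).re
    rw [Complex.Gamma_ofReal, Complex.ofReal_re]
  exact h2.unique Real.hasDerivAt_Gamma_one_half

lemma deriv_gamma_half :
    deriv Complex.Gamma (1/2) =
      ((-Real.sqrt π * (Real.eulerMascheroniConstant + 2 * Real.log 2) : ℝ) : ℂ) :=
  Complex.ext (by rw [deriv_gamma_half_re, Complex.ofReal_re])
    (by rw [deriv_gamma_half_im, Complex.ofReal_im])



lemma gamma_diff_pos_re {z : ℂ} (hz : 0 < z.re) : DifferentiableAt ℂ Complex.Gamma z := by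
  refine Complex.differentiableAt_Gamma _ (fun m => ?_)
  intro h
  rw [h] at hz
  simp only [Complex.neg_re, Complex.natCast_re] at hz
  have := Nat.cast_nonneg (α := ℝ) m
  linarith

-- the function φ = deriv of z ↦ Γ(z)Γ(1-z) on the strip
lemma hasDerivAt_H {z : ℂ} (h1 : 0 < z.re) (h2 : z.re < 1) :
    HasDerivAt (fun w => Complex.Gamma w * Complex.Gamma (1 - w))
      (deriv Complex.Gamma z * Complex.Gamma (1 - z)
        - Complex.Gamma z * deriv Complex.Gamma (1 - z)) z := by
  have hz' : 0 < (1 - z).re := by simp [Complex.sub_re]; linarith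
  have ha := (gamma_diff_pos_re h1).hasDerivAt
  have hb : HasDerivAt (fun w : ℂ => Complex.Gamma (1 - w)) (-(deriv Complex.Gamma (1 - z))) z := by
    have hinner : HasDerivAt (fun w : ℂ => 1 - w) (-1) z := (hasDerivAt_id z).const_sub 1
    simpa [Function.comp_def] using ((gamma_diff_pos_re hz').hasDerivAt.comp z hinner)
  exact (ha.mul hb).congr_deriv (by ring)

lemma hasDerivAt_R {z : ℂ} (hz : Complex.sin (π * z) ≠ 0) :
    HasDerivAt (fun w : ℂ => π / Complex.sin (π * w))
      (-(π:ℂ)^2 * Complex.cos (π * z) / (Complex.sin (π * z))^2) z := by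
  have hs : HasDerivAt (fun w : ℂ => Complex.sin (π * w)) ((π:ℂ) * Complex.cos (π * z)) z := by
    simpa [Function.comp_def, mul_comm] using (Complex.hasDerivAt_sin (π * z)).comp z
      ((hasDerivAt_id z).const_mul (π:ℂ))
  have := (hasDerivAt_const z (π:ℂ)).div hs hz
  refine this.congr_deriv ?_
  field_simp
  ring

lemma sin_pi_half : Complex.sin ((π:ℂ) * (1/2)) = 1 := by
  have : ((π:ℂ) * (1/2)) = ((π/2 : ℝ) : ℂ) := by push_cast; ring
  rw [this, ← Complex.ofReal_sin, Real.sin_pi_div_two, Complex.ofReal_one]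

lemma cos_pi_half : Complex.cos ((π:ℂ) * (1/2)) = 0 := by
  have : ((π:ℂ) * (1/2)) = ((π/2 : ℝ) : ℂ) := by push_cast; ring
  rw [this, ← Complex.ofReal_cos, Real.cos_pi_div_two, Complex.ofReal_zero]

-- second derivative identity from the reflection formula
lemma reflection_second :
    2 * Complex.Gamma (1/2) * (mellin (fk 2) (1/2))
      - 2 * (deriv Complex.Gamma (1/2))^2 = (π:ℂ)^3 := by
  set M₂ := mellin (fk 2) (1/2) with hM₂
  set G₁ := deriv Complex.Gamma (1/2) with hG₁
  -- open strip U
  have hUopen : IsOpen {z : ℂ | 0 < z.re ∧ z.re < 1} :=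
    (isOpen_lt continuous_const Complex.continuous_re).inter
      (isOpen_lt Complex.continuous_re continuous_const)
  have hUmem : {z : ℂ | 0 < z.re ∧ z.re < 1} ∈ 𝓝 (1/2 : ℂ) :=
    hUopen.mem_nhds (by norm_num)
  -- the two functions agree
  have hHR : (fun w => Complex.Gamma w * Complex.Gamma (1 - w))
      = (fun w : ℂ => π / Complex.sin (π * w)) :=
    funext fun w => Complex.Gamma_mul_Gamma_one_sub w
  -- φ agrees with deriv H near 1/2
  have hφ : deriv (fun w => Complex.Gamma w * Complex.Gamma (1 - w)) =ᶠ[𝓝 (1/2 : ℂ)]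
      (fun z => deriv Complex.Gamma z * Complex.Gamma (1 - z)
        - Complex.Gamma z * deriv Complex.Gamma (1 - z)) := by
    filter_upwards [hUmem] with z hz
    exact (hasDerivAt_H hz.1 hz.2).deriv
  have hSopen : IsOpen {z : ℂ | Complex.sin (π * z) ≠ 0} :=
    isOpen_ne_fun (Complex.continuous_sin.comp (continuous_const.mul continuous_id)) continuous_const
  have hSmem : {z : ℂ | Complex.sin (π * z) ≠ 0} ∈ 𝓝 (1/2 : ℂ) := by
    refine hSopen.mem_nhds ?_
    simp only [mem_setOf_eq, sin_pi_half]
    exact one_ne_zero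
  have hψ : deriv (fun w : ℂ => π / Complex.sin (π * w)) =ᶠ[𝓝 (1/2 : ℂ)]
      (fun z => -(π:ℂ)^2 * Complex.cos (π * z) / (Complex.sin (π * z))^2) := by
    filter_upwards [hSmem] with z hz
    exact (hasDerivAt_R hz).deriv
  -- so φ =ᶠ ψ near 1/2
  have hφψ : (fun z => deriv Complex.Gamma z * Complex.Gamma (1 - z)
        - Complex.Gamma z * deriv Complex.Gamma (1 - z)) =ᶠ[𝓝 (1/2 : ℂ)]
      (fun z => -(π:ℂ)^2 * Complex.cos (π * z) / (Complex.sin (π * z))^2) := by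
    refine hφ.symm.trans ?_
    rw [hHR]
    exact hψ
  -- derivative of φ at 1/2
  have h12 : (1 : ℂ) - 1/2 = 1/2 := by norm_num
  have hγd : HasDerivAt Complex.Gamma G₁ (1/2 : ℂ) := (gamma_diff_pos_re (by norm_num)).hasDerivAt
  have hbg : HasDerivAt (fun z : ℂ => Complex.Gamma (1 - z)) (-G₁) (1/2 : ℂ) := by
    have hinner : HasDerivAt (fun w : ℂ => 1 - w) (-1) (1/2 : ℂ) := (hasDerivAt_id _).const_sub 1
    have := (by rw [h12]; exact hγd : HasDerivAt Complex.Gamma G₁ ((1:ℂ) - 1/2)).comp (1/2 : ℂ) hinner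
    simpa [Function.comp_def] using this
  have hbd : HasDerivAt (fun z : ℂ => deriv Complex.Gamma (1 - z)) (-M₂) (1/2 : ℂ) := by
    have hinner : HasDerivAt (fun w : ℂ => 1 - w) (-1) (1/2 : ℂ) := (hasDerivAt_id _).const_sub 1
    have h' : HasDerivAt (deriv Complex.Gamma) M₂ ((1:ℂ) - 1/2) := by
      rw [h12]; exact hasDerivAt_deriv_gamma
    simpa [Function.comp_def] using h'.comp (1/2 : ℂ) hinner
  have hφ' : HasDerivAt (fun z => deriv Complex.Gamma z * Complex.Gamma (1 - z)
        - Complex.Gamma z * deriv Complex.Gamma (1 - z))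
      ((M₂ * Complex.Gamma (1 - 1/2) + deriv Complex.Gamma (1/2) * (-G₁))
        - (G₁ * deriv Complex.Gamma (1 - 1/2) + Complex.Gamma (1/2) * (-M₂))) (1/2 : ℂ) :=
    (hasDerivAt_deriv_gamma.mul hbg).sub (hγd.mul hbd)
  -- derivative of ψ at 1/2
  have hψ' : HasDerivAt (fun z => -(π:ℂ)^2 * Complex.cos (π * z) / (Complex.sin (π * z))^2)
      ((π:ℂ)^3) (1/2 : ℂ) := by
    have hs : HasDerivAt (fun w : ℂ => Complex.sin (π * w)) ((π:ℂ) * Complex.cos (π * (1/2))) (1/2 : ℂ) := by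
      simpa [Function.comp_def, mul_comm] using (Complex.hasDerivAt_sin (π * (1/2))).comp (1/2 : ℂ)
        ((hasDerivAt_id _).const_mul (π:ℂ))
    have hc : HasDerivAt (fun w : ℂ => -(π:ℂ)^2 * Complex.cos (π * w))
        (-(π:ℂ)^2 * (-Complex.sin (π * (1/2)) * π)) (1/2 : ℂ) := by
      have := ((Complex.hasDerivAt_cos (π * (1/2))).comp (1/2 : ℂ)
        ((hasDerivAt_id _).const_mul (π:ℂ))).const_mul (-(π:ℂ)^2)
      simpa [mul_comm, mul_assoc] using this
    have hden : HasDerivAt (fun w : ℂ => (Complex.sin (π * w))^2)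
        (2 * Complex.sin (π * (1/2)) * ((π:ℂ) * Complex.cos (π * (1/2)))) (1/2 : ℂ) := by
      simpa [pow_one, Pi.pow_def] using (hs.pow 2)
    have hne : (Complex.sin ((π:ℂ) * (1/2)))^2 ≠ 0 := by
      rw [sin_pi_half]; norm_num
    have := hc.div hden hne
    refine this.congr_deriv ?_
    rw [sin_pi_half, cos_pi_half]
    ring
  -- uniqueness of derivatives
  have : HasDerivAt (fun z => deriv Complex.Gamma z * Complex.Gamma (1 - z)
        - Complex.Gamma z * deriv Complex.Gamma (1 - z)) ((π:ℂ)^3) (1/2 : ℂ) :=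
    hψ'.congr_of_eventuallyEq hφψ
  have hkey := hφ'.unique this
  rw [h12] at hkey
  rw [← hkey, ← hG₁]
  ring



/-- The real integrand. -/
def gI (k : ℕ) (t : ℝ) : ℝ := t ^ (-(1/2) : ℝ) * ((Real.log t) ^ k * Real.exp (-t))

lemma fkR_locInt (k : ℕ) :
    LocallyIntegrableOn (fun t : ℝ => (Real.log t) ^ k * Real.exp (-t)) (Ioi 0) := by
  refine (ContinuousOn.locallyIntegrableOn ?_ measurableSet_Ioi)
  exact ((Real.continuousOn_log.mono (fun t ht => ne_of_gt ht)).pow k).mul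
    (Real.continuous_exp.comp continuous_neg).continuousOn

lemma fkR_top (k : ℕ) (hk : k ≤ 2) :
    (fun t : ℝ => (Real.log t) ^ k * Real.exp (-t)) =O[atTop] (fun t : ℝ => t ^ (-1 : ℝ)) := by
  have := (fk_top k hk).norm_left
  rw [← isBigO_norm_left]
  exact this.congr_left fun t => by simp only [fk, Complex.norm_real]

lemma fkR_bot (k : ℕ) (hk : k ≤ 2) :
    (fun t : ℝ => (Real.log t) ^ k * Real.exp (-t)) =O[𝓝[>] 0]
      (fun t : ℝ => t ^ (-(4⁻¹) : ℝ)) := by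
  have := (fk_bot k hk).norm_left
  rw [← isBigO_norm_left]
  exact this.congr_left fun t => by simp only [fk, Complex.norm_real]

lemma gI_integrable (k : ℕ) (hk : k ≤ 2) : IntegrableOn (gI k) (Ioi 0) := by
  have := mellin_convergent_of_isBigO_scalar (s := (1/2 : ℝ)) (fkR_locInt k)
    (fkR_top k hk) (by norm_num) (fkR_bot k hk) (by norm_num)
  refine this.congr_fun (fun t ht => ?_) measurableSet_Ioi
  rw [gI]
  norm_num

lemma mellin_fk_eq_gI (k : ℕ) : mellin (fk k) (1/2) = ((∫ t in Ioi 0, gI k t : ℝ) : ℂ) := by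
  have key : ∀ t ∈ Ioi (0:ℝ), (t:ℂ) ^ ((1:ℂ)/2 - 1) • fk k t = ((gI k t : ℝ) : ℂ) := by
    intro t ht
    have h1 : ((1:ℂ)/2 - 1) = ((-(1/2) : ℝ) : ℂ) := by push_cast; ring
    rw [fk, gI, h1, ← Complex.ofReal_cpow (le_of_lt ht), smul_eq_mul, ← Complex.ofReal_mul]
  rw [mellin, setIntegral_congr_fun measurableSet_Ioi key]
  exact integral_ofReal

lemma gI_zero_val : ∫ t in Ioi 0, gI 0 t = Real.sqrt π := by
  rw [← Real.Gamma_one_half_eq, Real.Gamma_eq_integral one_half_pos]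
  refine setIntegral_congr_fun measurableSet_Ioi (fun t ht => ?_)
  rw [gI]
  norm_num
  ring

lemma gI_one_val :
    ∫ t in Ioi 0, gI 1 t
      = -Real.sqrt π * (Real.eulerMascheroniConstant + 2 * Real.log 2) := by
  have h := deriv_gamma_half_mellin.symm.trans deriv_gamma_half
  rw [mellin_fk_eq_gI 1] at h
  exact_mod_cast h

lemma gI_two_val :
    ∫ t in Ioi 0, gI 2 t
      = Real.sqrt π * ((Real.eulerMascheroniConstant + 2 * Real.log 2)^2 + π^2/2) := by
  have h := reflection_second
  have hgh : Complex.Gamma (1/2) = ((Real.sqrt π : ℝ) : ℂ) := by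
    rw [show ((1:ℂ)/2) = (((1:ℝ)/2 : ℝ) : ℂ) by norm_num, Complex.Gamma_ofReal,
      Real.Gamma_one_half_eq]
  rw [mellin_fk_eq_gI 2, deriv_gamma_half, hgh] at h
  set c := Real.eulerMascheroniConstant + 2 * Real.log 2
  set J := ∫ t in Ioi 0, gI 2 t
  have h' : 2 * Real.sqrt π * J - 2 * (-Real.sqrt π * c)^2 = π^3 := by
    exact_mod_cast h
  have hs : Real.sqrt π * Real.sqrt π = π := Real.mul_self_sqrt pi_pos.le
  have hsp : 0 < Real.sqrt π := Real.sqrt_pos.mpr pi_pos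
  have : 2 * Real.sqrt π * J = 2 * Real.sqrt π * (Real.sqrt π * (c^2 + π^2/2)) := by
    linear_combination h' - π^2 * hs
  exact mul_left_cancel₀ (by positivity) this



/-- If `X ~ N(0, v)` with `v > 0`, then `Var(ln |X|) = π²/8`, independently of `v`. -/
theorem variance_log_abs_gaussian (v : NNReal) (hv : 0 < v) :
    ∫ x, (Real.log |x|
        - (Real.log v - Real.log 2 - Real.eulerMascheroniConstant) / 2) ^ 2
      ∂(gaussianReal 0 v) = Real.pi ^ 2 / 8 := by
  set γ := Real.eulerMascheroniConstant
  set m : ℝ := (Real.log v - Real.log 2 - γ) / 2 with hm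
  set c : ℝ := γ + 2 * Real.log 2 with hc
  have hv' : (0:ℝ) < (v:ℝ) := by exact_mod_cast hv
  set b : ℝ := Real.sqrt (2 * v) with hb
  have hbpos : 0 < b := Real.sqrt_pos.mpr (by positivity)
  set F : ℝ → ℝ := fun y => (Real.sqrt (2*π*v))⁻¹ * Real.exp (-y^2/(2*v)) * (Real.log y - m)^2
    with hF
  -- Step 1: unfold the gaussian measure
  have step1 : ∫ x, (Real.log |x| - m) ^ 2 ∂(gaussianReal 0 v)
      = ∫ x, gaussianPDFReal 0 v x * (Real.log |x| - m) ^ 2 := by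
    rw [gaussianReal_of_var_ne_zero 0 hv.ne']
    have hpdf : gaussianPDF 0 v = fun x => ((gaussianPDFReal 0 v x).toNNReal : ℝ≥0∞) := rfl
    rw [hpdf, integral_withDensity_eq_integral_smul
      ((measurable_gaussianPDFReal 0 v).real_toNNReal) _]
    refine integral_congr_ae (Eventually.of_forall fun x => ?_)
    show (gaussianPDFReal 0 v x).toNNReal • (Real.log |x| - m)^2
      = gaussianPDFReal 0 v x * (Real.log |x| - m)^2
    rw [NNReal.smul_def, smul_eq_mul, Real.coe_toNNReal _ (gaussianPDFReal_nonneg 0 v x)]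
  -- Step 2: rewrite as F ∘ abs
  have step2 : ∫ x, gaussianPDFReal 0 v x * (Real.log |x| - m) ^ 2 = ∫ x, F |x| := by
    refine integral_congr_ae (Eventually.of_forall fun x => ?_)
    simp only [hF, gaussianPDFReal_def, sub_zero, sq_abs]
  -- Step 3: symmetry
  have step3 : ∫ x, F |x| = 2 * ∫ x in Ioi 0, F x := integral_comp_abs
  -- Step 4: scaling
  have step4 : ∫ x in Ioi 0, F x = b * ∫ x in Ioi 0, F (b * x) := by
    rw [integral_comp_mul_left_Ioi F 0 hbpos, mul_zero, smul_eq_mul, ← mul_assoc,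
      mul_inv_cancel₀ hbpos.ne', one_mul]
  -- Step 5: substitution t^(1/2)
  have step5 : ∫ x in Ioi 0, F (b * x)
      = ∫ t in Ioi 0, (|(1:ℝ)/2| * t ^ ((1:ℝ)/2 - 1)) • F (b * t ^ ((1:ℝ)/2)) :=
    (integral_comp_rpow_Ioi (fun y => F (b * y)) (by norm_num : (1:ℝ)/2 ≠ 0)).symm
  -- Step 6: pointwise identification
  have step6 : ∫ t in Ioi 0, (|(1:ℝ)/2| * t ^ ((1:ℝ)/2 - 1)) • F (b * t ^ ((1:ℝ)/2))
      = ∫ t in Ioi 0, (Real.sqrt (2*π*v))⁻¹ * 8⁻¹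
          * (gI 2 t + (2*c) * gI 1 t + c^2 * gI 0 t) := by
    refine setIntegral_congr_fun measurableSet_Ioi (fun t ht => ?_)
    have ht' : (0:ℝ) < t := ht
    have hsq : (b * t ^ ((1:ℝ)/2))^2 = 2 * v * t := by
      rw [mul_pow, hb, Real.sq_sqrt (by positivity), ← Real.rpow_natCast (t ^ ((1:ℝ)/2)) 2,
        ← Real.rpow_mul ht'.le]
      norm_num
    have hlog : Real.log (b * t ^ ((1:ℝ)/2)) - m = (Real.log t + c) / 2 := by
      rw [Real.log_mul hbpos.ne' (by positivity), hb, Real.log_sqrt (by positivity),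
        Real.log_rpow ht', Real.log_mul two_ne_zero hv'.ne', hm, hc]
      ring
    have hexp : Real.exp (-(b * t ^ ((1:ℝ)/2))^2/(2*v)) = Real.exp (-t) := by
      rw [hsq]
      congr 1
      have h2v : (2:ℝ) * v ≠ 0 := by positivity
      field_simp
    rw [hF]
    simp only [smul_eq_mul]
    rw [hexp, hlog, gI, gI, gI]
    have h2 : t ^ ((1:ℝ)/2 - 1) = t ^ (-(1/2) : ℝ) := by norm_num
    rw [h2, abs_of_pos (by norm_num : (0:ℝ) < 1/2)]
    ring
  -- Step 7: evaluate
  have hsplit : ∫ t in Ioi 0, (Real.sqrt (2*π*v))⁻¹ * 8⁻¹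
          * (gI 2 t + (2*c) * gI 1 t + c^2 * gI 0 t)
      = (Real.sqrt (2*π*v))⁻¹ * 8⁻¹
          * ((∫ t in Ioi 0, gI 2 t) + (2*c) * (∫ t in Ioi 0, gI 1 t)
            + c^2 * (∫ t in Ioi 0, gI 0 t)) := by
    rw [integral_const_mul]
    congr 1
    rw [integral_add (f := fun a => gI 2 a + 2*c*gI 1 a) (g := fun a => c^2*gI 0 a)
        (((gI_integrable 2 (by norm_num)).add
          ((gI_integrable 1 (by norm_num)).const_mul (2*c))))
        ((gI_integrable 0 (by norm_num)).const_mul (c^2)),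
      integral_add (f := fun a => gI 2 a) (g := fun a => 2*c*gI 1 a)
        (gI_integrable 2 (by norm_num))
        ((gI_integrable 1 (by norm_num)).const_mul (2*c)),
      integral_const_mul, integral_const_mul]
  have hval : (∫ t in Ioi 0, gI 2 t) + (2*c) * (∫ t in Ioi 0, gI 1 t)
      + c^2 * (∫ t in Ioi 0, gI 0 t) = Real.sqrt π * (π^2/2) := by
    rw [gI_zero_val, gI_one_val, gI_two_val, ← hc]
    ring
  have hsqrt : Real.sqrt (2*π*(v:ℝ)) = Real.sqrt π * b := by
    rw [hb, ← Real.sqrt_mul pi_pos.le]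
    congr 1
    ring
  have hπ : (0:ℝ) < Real.sqrt π := Real.sqrt_pos.mpr pi_pos
  calc ∫ x, (Real.log |x| - m) ^ 2 ∂(gaussianReal 0 v)
      = 2 * (b * ((Real.sqrt (2*π*v))⁻¹ * 8⁻¹ * (Real.sqrt π * (π^2/2)))) := by
        rw [step1, step2, step3, step4, step5, step6, hsplit, hval]
    _ = π^2/8 := by
        rw [hsqrt, mul_inv]
        field_simp
end
end

section
/- Let f(x) = (2π)^{−1/2} exp(−x²/2) be the standard normal density and let f^{(j)} denote its j-th derivative. For every integer k ≥ 1, ∫_ℝ ln|x| · f^{(2k)}(x) dx = (−1)^{k−1} · 2^{k−1} (k−1)!. -/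
open MeasureTheory Real Set Filter Polynomial Topology

noncomputable section AuxLogGauss

namespace AuxLogGauss

/-- The (unnormalized) gaussian. -/
def G : ℝ → ℝ := fun y => Real.exp (-(y ^ 2 / 2))

lemma G_eq (x : ℝ) : G x = Real.exp (-(1/2) * x ^ 2) := by
  unfold G; ring_nf

lemma continuous_G : Continuous G :=
  Real.continuous_exp.comp (by continuity)

/-- Real polynomial attached to an integer polynomial. -/
def PR (p : Polynomial ℤ) : Polynomial ℝ := p.map (Int.castRingHom ℝ)

lemma eval_PR (p : Polynomial ℤ) (x : ℝ) : eval x (PR p) = aeval x p := by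
  rw [PR, aeval_def, eval_map]; rfl

/-- The polynomial attached to `deriv^[n] G`. -/
def R (n : ℕ) : Polynomial ℝ := C ((-1 : ℝ) ^ n) * PR (Polynomial.hermite n)

lemma iterG (n : ℕ) : deriv^[n] G = fun x => eval x (R n) * G x := by
  funext x
  have := Polynomial.deriv_gaussian_eq_hermite_mul_gaussian n x
  simpa [show G = fun y => Real.exp (-(y ^ 2 / 2)) from rfl, R, eval_PR, mul_assoc] using this

/-- Integrability of polynomial × gaussian. -/
lemma integrable_poly_G (p : Polynomial ℝ) : Integrable (fun x => eval x p * G x) := by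
  induction p using Polynomial.induction_on' with
  | add p q hp hq =>
      simp only [eval_add, add_mul]; exact hp.add hq
  | monomial n c =>
      have h : Integrable fun x : ℝ => x ^ (n : ℝ) * Real.exp (-(1/2) * x ^ 2) :=
        integrable_rpow_mul_exp_neg_mul_sq (by norm_num)
          (lt_of_lt_of_le neg_one_lt_zero (Nat.cast_nonneg n))
      have heq : (fun x : ℝ => eval x (monomial n c) * G x)
          = fun x : ℝ => c * (x ^ (n : ℝ) * Real.exp (-(1/2) * x ^ 2)) := by
        funext x
        rw [eval_monomial, G_eq, Real.rpow_natCast]; ring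
      rw [heq]
      exact h.const_mul c

/-- Polynomial × gaussian tends to `0` at `cocompact`. -/
lemma tendsto_poly_G (p : Polynomial ℝ) :
    Tendsto (fun x => eval x p * G x) (cocompact ℝ) (𝓝 0) := by
  induction p using Polynomial.induction_on' with
  | add p q hp hq =>
      simpa [eval_add, add_mul] using hp.add hq
  | monomial n c =>
      have h := (tendsto_rpow_abs_mul_exp_neg_mul_sq_cocompact
        (by norm_num : (0:ℝ) < 1/2) (n : ℝ)).const_mul |c|
      rw [mul_zero] at h
      refine squeeze_zero_norm (fun x => ?_) h
      rw [eval_monomial, G_eq]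
      rw [Real.rpow_natCast]
      have hGpos : (0:ℝ) < Real.exp (-(1/2) * x ^ 2) := Real.exp_pos _
      rw [norm_mul, norm_mul, Real.norm_eq_abs, Real.norm_eq_abs, Real.norm_eq_abs,
        abs_pow, abs_of_pos hGpos]
      calc |c| * |x| ^ n * Real.exp (-(1/2) * x ^ 2)
          = |c| * (|x| ^ n * Real.exp (-(1/2) * x ^ 2)) := by ring
        _ ≤ |c| * (|x| ^ n * Real.exp (-(1/2) * x ^ 2)) := le_rfl

lemma tendsto_poly_G_atTop (p : Polynomial ℝ) :
    Tendsto (fun x => eval x p * G x) atTop (𝓝 0) :=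
  (tendsto_poly_G p).mono_left (by rw [cocompact_eq_atBot_atTop]; exact le_sup_right)

lemma tendsto_poly_G_atBot (p : Polynomial ℝ) :
    Tendsto (fun x => eval x p * G x) atBot (𝓝 0) :=
  (tendsto_poly_G p).mono_left (by rw [cocompact_eq_atBot_atTop]; exact le_sup_left)

lemma hasDerivAt_G (x : ℝ) : HasDerivAt G (-x * G x) x := by
  have hu : HasDerivAt (fun y : ℝ => -(y ^ 2 / 2)) (-x) x := by
    have := ((hasDerivAt_pow 2 x).div_const 2).neg
    exact this.congr_deriv (by norm_num)
  have := hu.exp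
  simpa [show G = fun y => Real.exp (-(y ^ 2 / 2)) from rfl, mul_comm] using this

lemma hasDerivAt_poly_G (p : Polynomial ℝ) (x : ℝ) :
    HasDerivAt (fun y => eval y p * G y)
      (eval x (derivative p - X * p) * G x) x := by
  have h := (p.hasDerivAt x).mul (hasDerivAt_G x)
  refine h.congr_deriv ?_
  simp [eval_sub, eval_mul, eval_X]
  ring

lemma hasDerivAt_iterG (n : ℕ) (x : ℝ) :
    HasDerivAt (deriv^[n] G) (deriv^[n + 1] G x) x := by
  have h : HasDerivAt (deriv^[n] G) (eval x (derivative (R n) - X * R n) * G x) x := by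
    rw [iterG n]; exact hasDerivAt_poly_G (R n) x
  have h2 : deriv^[n + 1] G x = eval x (derivative (R n) - X * R n) * G x := by
    rw [Function.iterate_succ_apply']; exact h.deriv
  rw [h2]; exact h

lemma continuous_iterG (n : ℕ) : Continuous (deriv^[n] G) := by
  rw [iterG]
  exact (Polynomial.continuous (R n)).mul continuous_G

lemma integrable_iterG (n : ℕ) : Integrable (deriv^[n] G) := by
  rw [iterG]; exact integrable_poly_G _

lemma tendsto_iterG_atTop (n : ℕ) : Tendsto (deriv^[n] G) atTop (𝓝 0) := by
  rw [iterG]; exact tendsto_poly_G_atTop _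

lemma tendsto_iterG_atBot (n : ℕ) : Tendsto (deriv^[n] G) atBot (𝓝 0) := by
  rw [iterG]; exact tendsto_poly_G_atBot _

/-- The integral of `deriv^[n+1] G` vanishes. -/
lemma integral_iterG_succ (n : ℕ) : ∫ x : ℝ, deriv^[n + 1] G x = 0 := by
  have hI : Integrable (deriv^[n + 1] G) := integrable_iterG _
  have hcont : Continuous (deriv^[n] G) := continuous_iterG n
  have hIic : ∫ x in Iic (0:ℝ), deriv^[n+1] G x = deriv^[n] G 0 - 0 :=
    integral_Iic_of_hasDerivAt_of_tendsto hcont.continuousWithinAt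
      (fun x _ => hasDerivAt_iterG n x) hI.integrableOn (tendsto_iterG_atBot n)
  have hIoi : ∫ x in Ioi (0:ℝ), deriv^[n+1] G x = 0 - deriv^[n] G 0 :=
    integral_Ioi_of_hasDerivAt_of_tendsto hcont.continuousWithinAt
      (fun x _ => hasDerivAt_iterG n x) hI.integrableOn (tendsto_iterG_atTop n)
  rw [← intervalIntegral.integral_Iic_add_Ioi hI.integrableOn hI.integrableOn, hIic, hIoi]
  ring

/-- `derivative (hermite (n+1)) = (n+1) * hermite n`. -/
lemma derivative_hermite (n : ℕ) :
    derivative (Polynomial.hermite (n + 1)) = C ((n : ℤ) + 1) * Polynomial.hermite n := by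
  induction n with
  | zero => simp [hermite_one, hermite_zero]
  | succ n ih =>
      have hC : C ((n : ℤ) + 1 + 1) = C ((n : ℤ) + 1) + 1 := by
        rw [← C_1, ← C_add]
      rw [hermite_succ (n + 1), derivative_sub, derivative_mul, derivative_X, one_mul, ih,
        derivative_mul, derivative_C, zero_mul, zero_add, hermite_succ n]
      push_cast
      rw [hC]
      ring

/-- Odd hermite polynomial divided by `X`. -/
def QZ (m : ℕ) : Polynomial ℤ := (Polynomial.hermite (2 * m + 1)).divX

lemma X_mul_QZ (m : ℕ) : X * QZ m = Polynomial.hermite (2 * m + 1) := by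
  have h0 : (Polynomial.hermite (2 * m + 1)).coeff 0 = 0 :=
    coeff_hermite_of_odd_add (by exact ⟨m, by ring⟩)
  conv_rhs => rw [← X_mul_divX_add (Polynomial.hermite (2 * m + 1))]
  rw [h0, C_0, add_zero]; rfl

lemma QZ_zero : QZ 0 = 1 := by
  apply mul_left_cancel₀ (Polynomial.X_ne_zero (R := ℤ))
  rw [X_mul_QZ]
  simpa using hermite_one

lemma QZ_succ (m : ℕ) :
    QZ (m + 1) = Polynomial.hermite (2 * m + 2) - C (2 * (m : ℤ) + 2) * QZ m := by
  apply mul_left_cancel₀ (Polynomial.X_ne_zero (R := ℤ))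
  rw [X_mul_QZ]
  have h1 : 2 * (m + 1) + 1 = (2 * m + 2) + 1 := by ring
  rw [h1, hermite_succ (2 * m + 2)]
  have h2 : (2 * m + 2 : ℕ) = (2 * m + 1) + 1 := by ring
  have h3 : derivative (Polynomial.hermite (2 * m + 2)) =
      C (2 * (m : ℤ) + 2) * Polynomial.hermite (2 * m + 1) := by
    rw [h2, derivative_hermite (2 * m + 1)]
    congr 2 <;> omega
  rw [h3, ← X_mul_QZ m]
  ring

/-- The key integral `B m = ∫ (hermite (2m+1) / X) * G`. -/
def B (m : ℕ) : ℝ := ∫ x : ℝ, eval x (PR (QZ m)) * G x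

lemma B_zero : B 0 = Real.sqrt (2 * π) := by
  have h : B 0 = ∫ x : ℝ, Real.exp (-(1/2) * x ^ 2) := by
    unfold B
    congr 1
    funext x
    rw [QZ_zero]
    simp [PR, G_eq]
  rw [h, integral_gaussian]
  congr 1
  ring

lemma even_neg_one_pow (m : ℕ) : ((-1 : ℝ)) ^ (2 * m + 2) = 1 :=
  Even.neg_one_pow ⟨m + 1, by ring⟩

lemma odd_neg_one_pow (m : ℕ) : ((-1 : ℝ)) ^ (2 * m + 1) = -1 :=
  Odd.neg_one_pow ⟨m, by ring⟩

lemma iterG_even (m : ℕ) :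
    deriv^[2 * m + 2] G = fun x => eval x (PR (Polynomial.hermite (2 * m + 2))) * G x := by
  rw [iterG]
  funext x
  rw [R, eval_mul, eval_C, even_neg_one_pow, one_mul]

lemma iterG_odd (m : ℕ) :
    deriv^[2 * m + 1] G = fun x => -(x * (eval x (PR (QZ m)) * G x)) := by
  rw [iterG]
  funext x
  rw [R, eval_mul, eval_C, odd_neg_one_pow, ← X_mul_QZ m]
  have : PR (X * QZ m) = X * PR (QZ m) := by
    rw [PR, PR, Polynomial.map_mul, Polynomial.map_X]
  rw [this, eval_mul, eval_X]
  ring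

lemma integral_hermite_even (m : ℕ) :
    ∫ x : ℝ, eval x (PR (Polynomial.hermite (2 * m + 2))) * G x = 0 := by
  rw [← iterG_even]
  have h : 2 * m + 2 = (2 * m + 1) + 1 := by ring
  rw [h]
  exact integral_iterG_succ (2 * m + 1)

lemma B_succ (m : ℕ) : B (m + 1) = -(2 * (m : ℝ) + 2) * B m := by
  have hmap : PR (QZ (m + 1)) =
      PR (Polynomial.hermite (2 * m + 2)) - C (2 * (m : ℝ) + 2) * PR (QZ m) := by
    rw [QZ_succ, PR, Polynomial.map_sub, Polynomial.map_mul, Polynomial.map_C]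
    congr 2
    simp
  unfold B
  rw [hmap]
  have h1 : (fun x : ℝ => eval x (PR (Polynomial.hermite (2 * m + 2))
      - C (2 * (m : ℝ) + 2) * PR (QZ m)) * G x)
      = fun x : ℝ => eval x (PR (Polynomial.hermite (2 * m + 2))) * G x
        - (2 * (m : ℝ) + 2) * (eval x (PR (QZ m)) * G x) := by
    funext x
    rw [eval_sub, eval_mul, eval_C]
    ring
  rw [h1, integral_sub (integrable_poly_G _)
    ((integrable_poly_G (PR (QZ m))).const_mul _),
    integral_hermite_even, integral_const_mul, zero_sub]
  ring

lemma B_val (m : ℕ) :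
    B m = (-1) ^ m * 2 ^ m * (Nat.factorial m) * Real.sqrt (2 * π) := by
  induction m with
  | zero => simpa using B_zero
  | succ m ih =>
      rw [B_succ, ih, Nat.factorial_succ]
      push_cast
      ring

lemma abs_log_le_abs_self {x : ℝ} (hx : 1 ≤ |x|) : |Real.log x| ≤ |x| := by
  rw [← Real.log_abs]
  rw [abs_of_nonneg (Real.log_nonneg hx)]
  calc Real.log |x| ≤ |x| - 1 := Real.log_le_sub_one_of_pos (by linarith)
    _ ≤ |x| := by linarith

lemma integrableOn_log_Ioc01 : IntegrableOn Real.log (Ioc (0:ℝ) 1) := by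
  have hcont : ContinuousOn (fun x : ℝ => x - x * Real.log x) (Icc 0 1) :=
    (continuous_id.sub Real.continuous_mul_log).continuousOn
  have hderiv : ∀ x ∈ Ioo (0:ℝ) 1,
      HasDerivAt (fun x : ℝ => x - x * Real.log x) (-Real.log x) x := by
    intro x hx
    have h := (hasDerivAt_id x).sub (Real.hasDerivAt_mul_log (ne_of_gt hx.1))
    refine h.congr_deriv ?_
    ring
  have hpos : ∀ x ∈ Ioo (0:ℝ) 1, 0 ≤ -Real.log x := by
    intro x hx
    have := Real.log_nonpos (le_of_lt hx.1) (le_of_lt hx.2)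
    linarith
  have h := intervalIntegral.integrableOn_deriv_of_nonneg hcont hderiv hpos
  exact h.neg.congr (Eventually.of_forall fun x => by simp)

lemma integrableOn_log_Ioc_neg : IntegrableOn Real.log (Ioc (-1:ℝ) 0) := by
  have hcont : ContinuousOn (fun x : ℝ => x + (-x) * Real.log (-x)) (Icc (-1:ℝ) 0) := by
    apply Continuous.continuousOn
    exact continuous_id.add (Real.continuous_mul_log.comp continuous_neg)
  have hderiv : ∀ x ∈ Ioo (-1:ℝ) 0,
      HasDerivAt (fun x : ℝ => x + (-x) * Real.log (-x)) (-Real.log x) x := by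
    intro x hx
    have hne : (-x) ≠ 0 := ne_of_gt (neg_pos.mpr hx.2)
    have h1 : HasDerivAt (fun y : ℝ => y * Real.log y) (Real.log (-x) + 1) (-x) :=
      Real.hasDerivAt_mul_log hne
    have h2 : HasDerivAt (fun y : ℝ => (-y) * Real.log (-y)) (-(Real.log (-x) + 1)) x := by
      have h0 := h1.comp x (hasDerivAt_neg x)
      have heq : ((fun y : ℝ => y * Real.log y) ∘ fun y : ℝ => -y)
          = fun y : ℝ => (-y) * Real.log (-y) := rfl
      rw [heq] at h0
      refine h0.congr_deriv ?_
      ring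
    have h3 := (hasDerivAt_id x).add h2
    refine h3.congr_deriv ?_
    rw [← Real.log_neg_eq_log x]
    ring
  have hpos : ∀ x ∈ Ioo (-1:ℝ) 0, 0 ≤ -Real.log x := by
    intro x hx
    obtain ⟨hx1, hx2⟩ := hx
    rw [← Real.log_neg_eq_log x]
    have := Real.log_nonpos (by linarith) (by linarith : -x ≤ 1)
    linarith
  have h := intervalIntegral.integrableOn_deriv_of_nonneg hcont hderiv hpos
  exact h.neg.congr (Eventually.of_forall fun x => by simp)

lemma measurable_log_poly_G (p : Polynomial ℝ) :
    AEStronglyMeasurable (fun x => Real.log x * (eval x p * G x)) (volume.restrict s) :=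
  (Real.measurable_log.mul ((Polynomial.continuous p).mul continuous_G).measurable).aestronglyMeasurable

lemma integrableOn_log_poly_G_tail (p : Polynomial ℝ) {s : Set ℝ}
    (hs : MeasurableSet s) (h1 : ∀ x ∈ s, 1 ≤ |x|) :
    IntegrableOn (fun x => Real.log x * (eval x p * G x)) s := by
  refine Integrable.mono' ((integrable_poly_G (X * p)).norm).integrableOn
    (measurable_log_poly_G p) ?_
  filter_upwards [ae_restrict_mem hs] with x hx
  rw [norm_mul]
  calc ‖Real.log x‖ * ‖eval x p * G x‖ ≤ |x| * ‖eval x p * G x‖ := by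
        exact mul_le_mul_of_nonneg_right (abs_log_le_abs_self (h1 x hx)) (norm_nonneg _)
    _ = ‖eval x (X * p) * G x‖ := by
        rw [eval_mul, eval_X, norm_mul, norm_mul, norm_mul, Real.norm_eq_abs x]
        ring

lemma integrableOn_log_poly_G_compact (p : Polynomial ℝ) {a b : ℝ}
    (hlog : IntegrableOn Real.log (Ioc a b)) :
    IntegrableOn (fun x => Real.log x * (eval x p * G x)) (Ioc a b) := by
  obtain ⟨C, hC⟩ := IsCompact.exists_bound_of_continuousOn isCompact_Icc
    (((Polynomial.continuous p).mul continuous_G).continuousOn (s := Icc a b))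
  refine Integrable.mono' ((hlog.norm).const_mul C) (measurable_log_poly_G p) ?_
  filter_upwards [ae_restrict_mem measurableSet_Ioc] with x hx
  rw [norm_mul]
  calc ‖Real.log x‖ * ‖eval x p * G x‖ ≤ ‖Real.log x‖ * C :=
        mul_le_mul_of_nonneg_left (hC x ⟨le_of_lt hx.1, hx.2⟩) (norm_nonneg _)
    _ = C * ‖Real.log x‖ := by ring

lemma integrableOn_log_poly_G_Ioi (p : Polynomial ℝ) :
    IntegrableOn (fun x => Real.log x * (eval x p * G x)) (Ioi 0) := by
  rw [← Ioc_union_Ioi_eq_Ioi (zero_le_one (α := ℝ))]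
  refine (integrableOn_log_poly_G_compact p integrableOn_log_Ioc01).union
    (integrableOn_log_poly_G_tail p measurableSet_Ioi ?_)
  intro x hx
  rw [abs_of_pos (lt_trans one_pos hx)]
  exact le_of_lt hx

lemma integrableOn_log_poly_G_Iic (p : Polynomial ℝ) :
    IntegrableOn (fun x => Real.log x * (eval x p * G x)) (Iic 0) := by
  rw [← Iic_union_Ioc_eq_Iic (by norm_num : (-1:ℝ) ≤ 0)]
  refine (integrableOn_log_poly_G_tail p measurableSet_Iic ?_).union
    (integrableOn_log_poly_G_compact p integrableOn_log_Ioc_neg)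
  intro x hx
  rw [abs_of_nonpos (by linarith [mem_Iic.mp hx] : x ≤ 0)]
  linarith [mem_Iic.mp hx]

lemma iterate_deriv_const_mul (c : ℝ) (n : ℕ) :
    deriv^[n] (fun x => c * G x) = fun x => c * deriv^[n] G x := by
  induction n with
  | zero => rfl
  | succ n ih =>
      rw [Function.iterate_succ_apply', ih]
      funext x
      rw [Function.iterate_succ_apply']
      exact deriv_const_mul c (hasDerivAt_iterG n x).differentiableAt

/-- The integration by parts identity. -/
lemma integral_log_iterG (m : ℕ) :
    ∫ x : ℝ, Real.log x * deriv^[2 * m + 2] G x = B m := by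
  set q : Polynomial ℝ := PR (QZ m) with hq
  set Hp : Polynomial ℝ := PR (Polynomial.hermite (2 * m + 2)) with hHp
  have hg_eq : deriv^[2 * m + 1] G = fun x => -(x * (eval x q * G x)) := iterG_odd m
  have hg2 : deriv^[2 * m + 2] G = fun x => eval x Hp * G x := iterG_even m
  set F : ℝ → ℝ := fun x => Real.log x * deriv^[2 * m + 1] G x with hF
  set φ : ℝ → ℝ := fun x => -(eval x q * G x) + Real.log x * (eval x Hp * G x) with hφ
  have hFrep : F = fun x => -((x * Real.log x) * (eval x q * G x)) := by
    funext x
    simp only [hF, hg_eq]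
    ring
  have hFcont : Continuous F := by
    rw [hFrep]
    exact (Real.continuous_mul_log.mul ((Polynomial.continuous q).mul continuous_G)).neg
  have hF0 : F 0 = 0 := by rw [hFrep]; simp
  have hbound : ∀ x : ℝ, 1 ≤ |x| → ‖F x‖ ≤ ‖eval x (X * R (2 * m + 1)) * G x‖ := by
    intro x hx
    have h1 : F x = Real.log x * (eval x (R (2 * m + 1)) * G x) := by
      simp only [hF, iterG]
    rw [h1]
    simp only [norm_mul, eval_mul, eval_X, Real.norm_eq_abs, mul_assoc]
    exact mul_le_mul_of_nonneg_right (abs_log_le_abs_self hx) (by positivity)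
  have htail : Tendsto (fun x : ℝ => ‖eval x (X * R (2 * m + 1)) * G x‖) (cocompact ℝ) (𝓝 0) := by
    have := (tendsto_poly_G (X * R (2 * m + 1))).norm
    simpa using this
  have hFtop : Tendsto F atTop (𝓝 0) := by
    refine squeeze_zero_norm' ?_ (htail.mono_left (by rw [cocompact_eq_atBot_atTop]; exact le_sup_right))
    filter_upwards [eventually_ge_atTop (1:ℝ)] with x hx
    exact hbound x (by rw [abs_of_pos (by linarith)]; linarith)
  have hFbot : Tendsto F atBot (𝓝 0) := by
    refine squeeze_zero_norm' ?_ (htail.mono_left (by rw [cocompact_eq_atBot_atTop]; exact le_sup_left))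
    filter_upwards [eventually_le_atBot (-1:ℝ)] with x hx
    exact hbound x (by rw [abs_of_nonpos (by linarith)]; linarith)
  have hderivF : ∀ x : ℝ, x ≠ 0 → HasDerivAt F (φ x) x := by
    intro x hx
    have h1 := (Real.hasDerivAt_log hx).mul (hasDerivAt_iterG (2 * m + 1) x)
    have h2 : (2 * m + 1) + 1 = 2 * m + 2 := by ring
    rw [h2] at h1
    refine h1.congr_deriv ?_
    simp only [hφ, hg2, hg_eq]
    field_simp
  have hφIoi : IntegrableOn φ (Ioi 0) :=
    (((integrable_poly_G q).neg).integrableOn).add (integrableOn_log_poly_G_Ioi Hp)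
  have hφIic : IntegrableOn φ (Iic 0) :=
    (((integrable_poly_G q).neg).integrableOn).add (integrableOn_log_poly_G_Iic Hp)
  have hIoi : ∫ x in Ioi (0:ℝ), φ x = 0 - F 0 :=
    integral_Ioi_of_hasDerivAt_of_tendsto hFcont.continuousWithinAt
      (fun x hx => hderivF x (ne_of_gt hx)) hφIoi hFtop
  have hIic : ∫ x in Iic (0:ℝ), φ x = F 0 - 0 :=
    integral_Iic_of_hasDerivAt_of_tendsto hFcont.continuousWithinAt
      (fun x hx => hderivF x (ne_of_lt hx)) hφIic hFbot
  have hφint : ∫ x : ℝ, φ x = 0 := by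
    rw [← intervalIntegral.integral_Iic_add_Ioi hφIic hφIoi, hIic, hIoi]
    ring
  have hlogint : Integrable (fun x : ℝ => Real.log x * (eval x Hp * G x)) := by
    rw [← integrableOn_univ, ← Iic_union_Ioi (a := (0:ℝ))]
    exact (integrableOn_log_poly_G_Iic Hp).union (integrableOn_log_poly_G_Ioi Hp)
  have hsplit : ∫ x : ℝ, φ x =
      (∫ x : ℝ, -(eval x q * G x)) + ∫ x : ℝ, Real.log x * (eval x Hp * G x) :=
    integral_add ((integrable_poly_G q).neg) hlogint
  have hres : ∫ x : ℝ, Real.log x * (eval x Hp * G x) = B m := by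
    have := hφint
    rw [hsplit, integral_neg] at this
    unfold B
    linarith
  simp only [hg2]
  exact hres

end AuxLogGauss


end AuxLogGauss

/-- For the standard normal density `f` and every `k ≥ 1`,
`∫ ln|x| f^(2k)(x) dx = (-1)^(k-1) 2^(k-1) (k-1)!`. -/
theorem integral_log_abs_mul_iteratedDeriv_gaussian_density (k : ℕ) (hk : 1 ≤ k) :
    ∫ x : ℝ, Real.log |x|
        * iteratedDeriv (2 * k) (fun x : ℝ => (2 * Real.pi) ^ (-(1 : ℝ)/2) * Real.exp (-x ^ 2 / 2)) x
      = (-1) ^ (k - 1) * 2 ^ (k - 1) * (Nat.factorial (k - 1)) := by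
  obtain ⟨m, rfl⟩ : ∃ m, k = m + 1 := ⟨k - 1, (Nat.succ_pred_eq_of_pos hk).symm⟩
  have hG : ContDiff ℝ (2 * (m + 1)) AuxLogGauss.G := by
    unfold AuxLogGauss.G
    exact Real.contDiff_exp.comp (((contDiff_id.pow 2).div_const 2).neg)
  have hfun : (fun x : ℝ => (2 * Real.pi) ^ (-(1 : ℝ)/2) * Real.exp (-x ^ 2 / 2))
      = fun x : ℝ => (2 * Real.pi) ^ (-(1 : ℝ)/2) * AuxLogGauss.G x := by
    funext x
    simp only [AuxLogGauss.G, neg_div]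
  rw [hfun]
  set c : ℝ := (2 * Real.pi) ^ (-(1 : ℝ)/2) with hc
  have hidx : 2 * (m + 1) = 2 * m + 2 := by ring
  have hit : iteratedDeriv (2 * (m + 1)) (fun x : ℝ => c * AuxLogGauss.G x)
      = fun x => c * deriv^[2 * m + 2] AuxLogGauss.G x := by
    rw [iteratedDeriv_eq_iterate, hidx, AuxLogGauss.iterate_deriv_const_mul]
  simp only [hit, Real.log_abs]
  have hcomm : (fun x : ℝ => Real.log x * (c * deriv^[2 * m + 2] AuxLogGauss.G x))
      = fun x : ℝ => c * (Real.log x * deriv^[2 * m + 2] AuxLogGauss.G x) := by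
    funext x
    ring
  rw [hcomm, integral_const_mul, AuxLogGauss.integral_log_iterG, AuxLogGauss.B_val]
  have hone : c * Real.sqrt (2 * π) = 1 := by
    have h0 : (-(1:ℝ)/2) + 1/(2:ℝ) = 0 := by norm_num
    rw [hc, Real.sqrt_eq_rpow, ← Real.rpow_add (by positivity), h0, Real.rpow_zero]
  simp only [Nat.add_sub_cancel]
  calc c * ((-1) ^ m * 2 ^ m * (Nat.factorial m) * Real.sqrt (2 * π))
      = ((-1) ^ m * 2 ^ m * (Nat.factorial m)) * (c * Real.sqrt (2 * π)) := by ring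
    _ = (-1) ^ m * 2 ^ m * (Nat.factorial m) := by rw [hone]; ring
end

section
/- The series identity ∑_{k=1}^∞ 2^{2k−2} ((k−1)!)² / (2k)! = π²/8 holds. -/
open Real Set MeasureTheory intervalIntegral

section aux

lemma intB (k : ℕ) : IntervalIntegrable (fun x => -Real.log x * x ^ k) volume 0 1 ∧
    ∫ x in (0:ℝ)..1, (-Real.log x * x ^ k) = 1 / (k+1)^2 := by
  set F : ℝ → ℝ := fun x => x ^ (k+1) / ((k:ℝ)+1)^2 - x ^ (k+1) * Real.log x / ((k:ℝ)+1) with hFdef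
  have hcont : Continuous F := by
    have h1 : Continuous fun x : ℝ => x ^ (k+1) / ((k:ℝ)+1)^2 := by continuity
    have h2 : Continuous fun x : ℝ => x ^ k * (x * Real.log x) / ((k:ℝ)+1) := by
      exact ((continuous_pow k).mul Real.continuous_mul_log).div_const _
    have : F = fun x => x ^ (k+1) / ((k:ℝ)+1)^2 - x ^ k * (x * Real.log x) / ((k:ℝ)+1) := by
      funext x; simp only [hFdef, pow_succ]; ring
    rw [this]
    exact h1.sub h2
  have hderiv : ∀ x ∈ Ioo (0:ℝ) 1, HasDerivAt F (-Real.log x * x ^ k) x := by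
    intro x hx
    have hx0 : x ≠ 0 := ne_of_gt hx.1
    have d1 : HasDerivAt (fun x : ℝ => x ^ (k+1)) (((k:ℝ)+1) * x ^ k) x := by
      simpa using hasDerivAt_pow (k+1) x
    have d2 : HasDerivAt (fun x : ℝ => x ^ (k+1) * Real.log x)
        (((k:ℝ)+1) * x ^ k * Real.log x + x ^ (k+1) * x⁻¹) x :=
      d1.mul (Real.hasDerivAt_log hx0)
    have := (d1.div_const (((k:ℝ)+1)^2)).sub (d2.div_const ((k:ℝ)+1))
    refine this.congr_deriv ?_
    have hk : ((k:ℝ)+1) ≠ 0 := by positivity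
    field_simp
    ring
  have hint : IntervalIntegrable (fun x => -Real.log x * x ^ k) volume 0 1 := by
    apply intervalIntegrable_deriv_of_nonneg hcont.continuousOn
    · simpa using hderiv
    · intro x hx
      have hx' : x ∈ Ioo (0:ℝ) 1 := by simpa using hx
      have h1 : Real.log x ≤ 0 := Real.log_nonpos hx'.1.le hx'.2.le
      have h2 : 0 ≤ -Real.log x := by linarith
      have h3 : (0:ℝ) ≤ x ^ k := pow_nonneg hx'.1.le k
      exact mul_nonneg h2 h3
  refine ⟨hint, ?_⟩
  have := integral_eq_sub_of_hasDerivAt_of_le (by norm_num) hcont.continuousOn hderiv hint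
  rw [this]
  simp only [hFdef, Real.log_one, one_pow, mul_zero, zero_div, sub_zero, ne_eq,
    zero_pow (Nat.succ_ne_zero k), Real.log_zero, zero_mul]

lemma intA (n : ℕ) : ∫ x in (0:ℝ)..1, (1 - x^2)^n
    = (4:ℝ)^n * (Nat.factorial n)^2 / Nat.factorial (2*n+1) := by
  induction n with
  | zero => norm_num
  | succ n ih =>
    have hderiv : ∀ x ∈ Set.uIcc (0:ℝ) 1, HasDerivAt (fun x : ℝ => x * (1 - x^2)^(n+1))
        ((2*(n:ℝ)+3) * (1-x^2)^(n+1) - (2*(n:ℝ)+2) * (1-x^2)^n) x := by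
      intro x _
      have d1 : HasDerivAt (fun x : ℝ => 1 - x^2) (-(2*x)) x := by
        simpa using (hasDerivAt_pow 2 x).const_sub 1
      have d2 : HasDerivAt (fun x : ℝ => (1 - x^2)^(n+1))
          (((n:ℝ)+1) * (1-x^2)^n * (-(2*x))) x := by
        simpa [Function.comp_def] using (HasDerivAt.comp x (hasDerivAt_pow (n+1) (1-x^2)) d1)
      have := (hasDerivAt_id x).mul d2
      refine this.congr_deriv ?_
      simp only [id_eq, one_mul]
      rw [pow_succ]
      ring
    have hint : IntervalIntegrable
        (fun x : ℝ => (2*(n:ℝ)+3) * (1-x^2)^(n+1) - (2*(n:ℝ)+2) * (1-x^2)^n) volume 0 1 := by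
      apply Continuous.intervalIntegrable
      exact (continuous_const.mul ((continuous_const.sub (continuous_pow 2)).pow _)).sub
        (continuous_const.mul ((continuous_const.sub (continuous_pow 2)).pow _))
    have key := integral_eq_sub_of_hasDerivAt hderiv hint
    have c1 : Continuous fun x : ℝ => (1-x^2)^(n+1) :=
      (continuous_const.sub (continuous_pow 2)).pow _
    have c2 : Continuous fun x : ℝ => (1-x^2)^n :=
      (continuous_const.sub (continuous_pow 2)).pow _
    rw [integral_sub ((c1.intervalIntegrable 0 1).const_mul _)
        ((c2.intervalIntegrable 0 1).const_mul _),
      intervalIntegral.integral_const_mul, intervalIntegral.integral_const_mul] at key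
    simp only [one_pow, sub_self, ne_eq, OfNat.ofNat_ne_zero, not_false_eq_true, zero_pow,
      mul_zero, zero_mul, mul_one, sub_zero, one_mul] at key
    rw [ih] at key
    have h3 : (2*(n:ℝ)+3) ≠ 0 := by positivity
    have hfac : (Nat.factorial (2*n+1) : ℝ) ≠ 0 := Nat.cast_ne_zero.2 (Nat.factorial_ne_zero _)
    have hfac2 : (Nat.factorial (2*(n+1)+1) : ℝ)
        = (2*(n:ℝ)+3) * (2*(n:ℝ)+2) * Nat.factorial (2*n+1) := by
      have : 2*(n+1)+1 = (2*n+2)+1 := by ring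
      rw [this, Nat.factorial_succ, Nat.factorial_succ]
      push_cast; ring
    have : (∫ x in (0:ℝ)..1, (1 - x^2)^(n+1))
        = (2*(n:ℝ)+2) * ((4:ℝ)^n * (Nat.factorial n)^2 / Nat.factorial (2*n+1)) / (2*(n:ℝ)+3) := by
      rw [zero_pow (Nat.succ_ne_zero n)] at key
      field_simp at key ⊢
      linarith [key]
    have hfn : (Nat.factorial (n+1) : ℝ) = ((n:ℝ)+1) * Nat.factorial n := by
      rw [Nat.factorial_succ]; push_cast; ring
    have h2 : (2*(n:ℝ)+2) ≠ 0 := by positivity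
    rw [this, hfac2, pow_succ, hfn]
    field_simp
    ring

lemma oddZeta : HasSum (fun m : ℕ => 1 / ((2*(m:ℝ)+1))^2) (π^2/8) := by
  have h := hasSum_zeta_two
  have he : HasSum (fun k : ℕ => (1:ℝ) / (2*(k:ℝ))^2) (π^2/24) := by
    have := h.div_const 4
    have heq : (fun k : ℕ => (1:ℝ) / (k:ℝ)^2 / 4) = fun k : ℕ => 1 / (2*(k:ℝ))^2 := by
      funext k
      rw [div_div, mul_pow]
      norm_num
      rw [mul_comm]
    rw [heq] at this
    rw [show π^2/24 = π^2/6/4 by rw [div_div]; norm_num]; exact this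
  have hsum : Summable (fun m : ℕ => (1:ℝ) / (2*(m:ℝ)+1)^2) := by
    have : Summable (fun n : ℕ => (1:ℝ) / (n:ℝ)^2) := h.summable
    have hinj : Function.Injective (fun m : ℕ => 2*m+1) := fun a b hab => by simpa using hab
    have := this.comp_injective hinj
    refine this.congr (fun m => ?_)
    simp only [Function.comp]
    push_cast
    ring_nf
  obtain ⟨L, hL⟩ := hsum
  have hall : HasSum (fun n : ℕ => (1:ℝ) / (n:ℝ)^2) (π^2/24 + L) := by
    apply HasSum.even_add_odd
    · convert he using 2 with k; push_cast; ring_nf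
    · convert hL using 2 with k; push_cast; ring_nf
  have : π^2/24 + L = π^2/6 := hall.unique h
  have : L = π^2/8 := by linarith
  rwa [this] at hL

end aux

open Real

/-- `∑_{k≥1} 2^(2k-2) ((k-1)!)² / (2k)! = π²/8` (written with `k = n+1`). -/
theorem sum_sq_nu_div_factorial :
    ∑' n : ℕ, (2 : ℝ) ^ (2 * n) * (Nat.factorial n) ^ 2 / Nat.factorial (2 * (n + 1))
      = Real.pi ^ 2 / 8 := by
  set a : ℕ → ℝ := fun n => (2 : ℝ) ^ (2 * n) * (Nat.factorial n) ^ 2 / Nat.factorial (2 * (n + 1))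
    with ha
  set f : ℕ → ℝ → ℝ := fun n x => (1 - x^2)^n / (2*((n:ℝ)+1)) with hf
  set h : ℕ → ℝ → ℝ := fun m x => -Real.log x * x ^ (2*m) with hh
  have ha_nonneg : ∀ n, 0 ≤ a n := by
    intro n; rw [ha]; positivity
  -- integral of f n over Ioo 0 1 equals a n
  have hfint : ∀ n, IntegrableOn (f n) (Ioo (0:ℝ) 1) volume := by
    intro n
    apply ((((continuous_const.sub (continuous_pow 2)).pow n).div_const
      _).integrableOn_Ioc).mono_set Ioo_subset_Ioc_self
  have hfintegral : ∀ n, ∫ x in Ioo (0:ℝ) 1, f n x = a n := by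
    intro n
    rw [← integral_Ioc_eq_integral_Ioo, ← intervalIntegral.integral_of_le (by norm_num : (0:ℝ) ≤ 1)]
    have : ∫ x in (0:ℝ)..1, f n x = (∫ x in (0:ℝ)..1, (1-x^2)^n) / (2*((n:ℝ)+1)) := by
      rw [← intervalIntegral.integral_div]
    rw [this, intA n]
    show _ = (2:ℝ)^(2*n) * ((Nat.factorial n : ℝ))^2 / (Nat.factorial (2*(n+1)) : ℝ)
    have hfac : (Nat.factorial (2*(n+1)) : ℝ)
        = (2*((n:ℝ)+1)) * Nat.factorial (2*n+1) := by
      have : 2*(n+1) = (2*n+1)+1 := by ring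
      rw [this, Nat.factorial_succ]
      push_cast; ring
    rw [hfac]
    have h1 : (Nat.factorial (2*n+1) : ℝ) ≠ 0 := Nat.cast_ne_zero.2 (Nat.factorial_ne_zero _)
    have h2 : (2*((n:ℝ)+1)) ≠ 0 := by positivity
    have h4 : (2:ℝ)^(2*n) = 4^n := by rw [pow_mul]; norm_num
    rw [h4]
    field_simp
  -- integral of h m over Ioo 0 1 equals 1/(2m+1)^2
  have hhint : ∀ m, IntegrableOn (h m) (Ioo (0:ℝ) 1) volume := by
    intro m
    exact ((intB (2*m)).1.1).mono_set Ioo_subset_Ioc_self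
  have hhintegral : ∀ m, ∫ x in Ioo (0:ℝ) 1, h m x = 1 / (2*(m:ℝ)+1)^2 := by
    intro m
    rw [← integral_Ioc_eq_integral_Ioo, ← intervalIntegral.integral_of_le (by norm_num : (0:ℝ) ≤ 1)]
    rw [(intB (2*m)).2]
    push_cast
    ring_nf
  -- nonnegativity on Ioo
  have hf_nn : ∀ n, ∀ x ∈ Ioo (0:ℝ) 1, 0 ≤ f n x := by
    intro n x hx
    have : (0:ℝ) ≤ 1 - x^2 := by nlinarith [hx.1, hx.2]
    rw [hf]; positivity
  have hh_nn : ∀ m, ∀ x ∈ Ioo (0:ℝ) 1, 0 ≤ h m x := by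
    intro m x hx
    have h1 : Real.log x ≤ 0 := Real.log_nonpos hx.1.le hx.2.le
    have h2 : 0 ≤ -Real.log x := by linarith
    have h3 : (0:ℝ) ≤ x ^ (2*m) := pow_nonneg hx.1.le _
    exact mul_nonneg h2 h3
  -- pointwise sums
  have hfsum : ∀ x ∈ Ioo (0:ℝ) 1, HasSum (fun n => f n x) (-Real.log x / (1 - x^2)) := by
    intro x hx
    have ht0 : (0:ℝ) < 1 - x^2 := by nlinarith [hx.1, hx.2]
    have ht1 : |1 - x^2| < 1 := by
      rw [abs_of_pos ht0]; nlinarith [hx.1]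
    have hs := Real.hasSum_pow_div_log_of_abs_lt_one ht1
    have hx2 : 1 - (1 - x^2) = x^2 := by ring
    rw [hx2, Real.log_pow] at hs
    have := hs.div_const (2*(1-x^2))
    have hne : (1-x^2) ≠ 0 := ne_of_gt ht0
    have hfun : (fun n : ℕ => (1-x^2)^(n+1)/((n:ℝ)+1)/(2*(1-x^2))) = fun n => f n x := by
      funext n
      rw [hf, pow_succ]
      field_simp
    have hval : -(((2:ℕ):ℝ) * Real.log x) / (2*(1-x^2)) = -Real.log x / (1-x^2) := by
      push_cast
      field_simp
    rw [hfun, hval] at this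
    exact this
  have hhsum : ∀ x ∈ Ioo (0:ℝ) 1, HasSum (fun m => h m x) (-Real.log x / (1 - x^2)) := by
    intro x hx
    have hx2 : x^2 < 1 := by nlinarith [hx.1, hx.2]
    have hg := hasSum_geometric_of_lt_one (by positivity : (0:ℝ) ≤ x^2) hx2
    have := hg.mul_left (-Real.log x)
    have hfun : (fun m : ℕ => -Real.log x * (x^2)^m) = fun m => h m x := by
      funext m
      show -Real.log x * (x^2)^m = -Real.log x * x^(2*m)
      rw [pow_mul]
    have hval : -Real.log x * (1-x^2)⁻¹ = -Real.log x/(1-x^2) := (div_eq_mul_inv _ _).symm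
    rw [hfun, hval] at this
    exact this
  -- measurability
  have hfmeas : ∀ n, AEMeasurable (fun x => ENNReal.ofReal (f n x))
      (volume.restrict (Ioo (0:ℝ) 1)) := by
    intro n
    exact ((((continuous_const.sub (continuous_pow 2)).pow n).div_const
      _).measurable.ennreal_ofReal).aemeasurable
  have hhmeas : ∀ m, AEMeasurable (fun x => ENNReal.ofReal (h m x))
      (volume.restrict (Ioo (0:ℝ) 1)) := by
    intro m
    exact ((Real.measurable_log.neg.mul ((continuous_pow (2*m)).measurable)).ennreal_ofReal).aemeasurable
  -- the ENNReal chain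
  have step1 : ∀ n, ENNReal.ofReal (a n)
      = ∫⁻ x in Ioo (0:ℝ) 1, ENNReal.ofReal (f n x) := by
    intro n
    rw [← hfintegral n]
    apply ofReal_integral_eq_lintegral_ofReal (hfint n)
    filter_upwards [ae_restrict_mem measurableSet_Ioo] with x hx using hf_nn n x hx
  have step2 : ∀ m, (∫⁻ x in Ioo (0:ℝ) 1, ENNReal.ofReal (h m x))
      = ENNReal.ofReal (1 / (2*(m:ℝ)+1)^2) := by
    intro m
    rw [← hhintegral m]
    symm
    apply ofReal_integral_eq_lintegral_ofReal (hhint m)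
    filter_upwards [ae_restrict_mem measurableSet_Ioo] with x hx using hh_nn m x hx
  have chain : ∑' n, ENNReal.ofReal (a n) = ENNReal.ofReal (π^2/8) := by
    calc ∑' n, ENNReal.ofReal (a n)
        = ∑' n, ∫⁻ x in Ioo (0:ℝ) 1, ENNReal.ofReal (f n x) := by
          exact tsum_congr step1
      _ = ∫⁻ x in Ioo (0:ℝ) 1, ∑' n, ENNReal.ofReal (f n x) := (lintegral_tsum hfmeas).symm
      _ = ∫⁻ x in Ioo (0:ℝ) 1, ∑' m, ENNReal.ofReal (h m x) := by
          apply lintegral_congr_ae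
          filter_upwards [ae_restrict_mem measurableSet_Ioo] with x hx
          rw [← ENNReal.ofReal_tsum_of_nonneg (fun n => hf_nn n x hx) (hfsum x hx).summable,
            ← ENNReal.ofReal_tsum_of_nonneg (fun m => hh_nn m x hx) (hhsum x hx).summable,
            (hfsum x hx).tsum_eq, (hhsum x hx).tsum_eq]
      _ = ∑' m, ∫⁻ x in Ioo (0:ℝ) 1, ENNReal.ofReal (h m x) := lintegral_tsum hhmeas
      _ = ∑' m : ℕ, ENNReal.ofReal (1 / (2*(m:ℝ)+1)^2) := tsum_congr step2
      _ = ENNReal.ofReal (π^2/8) := by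
          rw [← ENNReal.ofReal_tsum_of_nonneg (fun m => by positivity) oddZeta.summable,
            oddZeta.tsum_eq]
  -- extract
  have hsummable : Summable a := by
    have hne : (∑' n, ENNReal.ofReal (a n)) ≠ ⊤ := by
      rw [chain]; exact ENNReal.ofReal_ne_top
    have := ENNReal.summable_toReal hne
    simpa only [ENNReal.toReal_ofReal (ha_nonneg _)] using this
  have : ENNReal.ofReal (∑' n, a n) = ENNReal.ofReal (π^2/8) := by
    rw [ENNReal.ofReal_tsum_of_nonneg ha_nonneg hsummable, chain]
  have hpi : (0:ℝ) ≤ π^2/8 := by positivity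
  have := (ENNReal.ofReal_eq_ofReal_iff (tsum_nonneg ha_nonneg) hpi).1 this
  exact this
end

section
/- Let ρ be a real number with |ρ| > 1, let (ε_t)_{t≥1} be i.i.d. standard normal N(0,1) random variables, and define X_0 = 0 and X_t = ρ X_{t−1} + √(ρ² − 1) ε_t for t ≥ 1 (so X_n ~ N(0, ρ^{2n} − 1)). Then (1/n) ln|X_n| → ln|ρ| almost surely as n → ∞. -/
open MeasureTheory ProbabilityTheory Real Filter

open Set
open scoped NNReal ENNReal

lemma gauss_Ioo_le (m : ℝ) (v : ℝ≥0) (hv : v ≠ 0) (l u : ℝ) :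
    gaussianReal m v (Set.Ioo l u) ≤ ENNReal.ofReal ((Real.sqrt (2 * π * v))⁻¹ * (u - l)) := by
  rw [gaussianReal_apply m hv]
  have hb : ∀ x : ℝ, gaussianPDF m v x ≤ ENNReal.ofReal ((Real.sqrt (2 * π * v))⁻¹) := by
    intro x
    rw [gaussianPDF_def]
    refine ENNReal.ofReal_le_ofReal ?_
    rw [gaussianPDFReal]
    nth_rewrite 2 [← mul_one ((Real.sqrt (2 * π * v))⁻¹)]
    refine mul_le_mul_of_nonneg_left ?_ (by positivity)
    refine Real.exp_le_one_iff.mpr (div_nonpos_of_nonpos_of_nonneg (neg_nonpos.mpr (sq_nonneg _)) (by positivity))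
  calc ∫⁻ x in Set.Ioo l u, gaussianPDF m v x
      ≤ ∫⁻ _ in Set.Ioo l u, ENNReal.ofReal ((Real.sqrt (2 * π * v))⁻¹) :=
        lintegral_mono fun x => hb x
    _ = ENNReal.ofReal ((Real.sqrt (2 * π * v))⁻¹) * volume (Set.Ioo l u) := by
        rw [setLIntegral_const]
    _ ≤ ENNReal.ofReal ((Real.sqrt (2 * π * v))⁻¹ * (u - l)) := by
        rw [Real.volume_Ioo, ← ENNReal.ofReal_mul (by positivity)]

lemma gauss_pdf_le (x : ℝ) :
    gaussianPDF 0 1 x ≤ ENNReal.ofReal (Real.exp (1/2 - |x|)) := by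
  rw [gaussianPDF_def]
  refine ENNReal.ofReal_le_ofReal ?_
  rw [gaussianPDFReal]
  have h1 : (Real.sqrt (2 * π * (1:ℝ≥0)))⁻¹ ≤ 1 := by
    rw [NNReal.coe_one, mul_one, inv_le_one_iff₀]
    right
    rw [show (1:ℝ) = Real.sqrt 1 by simp]
    exact Real.sqrt_le_sqrt (by nlinarith [Real.pi_gt_three])
  have h2 : Real.exp (-(x - 0)^2 / (2 * (1:ℝ≥0))) ≤ Real.exp (1/2 - |x|) := by
    refine Real.exp_le_exp.mpr ?_
    push_cast
    nlinarith [sq_nonneg (|x| - 1), sq_abs x]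
  calc (Real.sqrt (2 * π * (1:ℝ≥0)))⁻¹ * Real.exp (-(x - 0)^2 / (2 * (1:ℝ≥0)))
      ≤ 1 * Real.exp (1/2 - |x|) := mul_le_mul h1 h2 (Real.exp_nonneg _) one_pos.le
    _ = Real.exp (1/2 - |x|) := one_mul _

lemma gauss_tail (a : ℝ) (ha : 0 ≤ a) :
    gaussianReal 0 1 {x : ℝ | a < |x|} ≤ ENNReal.ofReal (2 * Real.exp (1/2 - a)) := by
  have hsub : {x : ℝ | a < |x|} ⊆ Set.Iio (-a) ∪ Set.Ioi a := by
    intro x hx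
    simp only [Set.mem_setOf_eq] at hx
    rcases le_or_gt 0 x with h | h
    · right; simpa [abs_of_nonneg h] using hx
    · left; rw [abs_of_neg h] at hx; simp only [Set.mem_Iio]; linarith
  have hIoi : gaussianReal 0 1 (Set.Ioi a) ≤ ENNReal.ofReal (Real.exp (1/2 - a)) := by
    rw [gaussianReal_apply 0 one_ne_zero]
    calc ∫⁻ x in Set.Ioi a, gaussianPDF 0 1 x
        ≤ ∫⁻ x in Set.Ioi a, ENNReal.ofReal (Real.exp (1/2) * Real.exp (-x)) := by
          refine setLIntegral_mono (by fun_prop) fun x hx => ?_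
          rw [← Real.exp_add]
          calc gaussianPDF 0 1 x ≤ ENNReal.ofReal (Real.exp (1/2 - |x|)) := gauss_pdf_le x
            _ ≤ _ := by
                refine ENNReal.ofReal_le_ofReal (Real.exp_le_exp.mpr ?_)
                have : 0 < x := lt_of_le_of_lt ha hx
                rw [abs_of_pos this]; linarith
      _ = ENNReal.ofReal (∫ x in Set.Ioi a, Real.exp (1/2) * Real.exp (-x)) := by
          rw [← ofReal_integral_eq_lintegral_ofReal]
          · exact ((exp_neg_integrableOn_Ioi a one_pos).congr_fun
              (fun x _ => by rw [neg_one_mul]) measurableSet_Ioi).const_mul _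
          · exact Filter.Eventually.of_forall fun x => by positivity
      _ ≤ ENNReal.ofReal (Real.exp (1/2 - a)) := by
          rw [integral_const_mul, integral_exp_neg_Ioi, ← Real.exp_add]
          exact ENNReal.ofReal_le_ofReal (le_of_eq (by ring_nf))
  have hIio : gaussianReal 0 1 (Set.Iio (-a)) ≤ ENNReal.ofReal (Real.exp (1/2 - a)) := by
    rw [gaussianReal_apply 0 one_ne_zero]
    calc ∫⁻ x in Set.Iio (-a), gaussianPDF 0 1 x
        ≤ ∫⁻ x in Set.Iio (-a), ENNReal.ofReal (Real.exp (1/2) * Real.exp x) := by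
          refine setLIntegral_mono (by fun_prop) fun x hx => ?_
          rw [← Real.exp_add]
          calc gaussianPDF 0 1 x ≤ ENNReal.ofReal (Real.exp (1/2 - |x|)) := gauss_pdf_le x
            _ ≤ _ := by
                refine ENNReal.ofReal_le_ofReal (Real.exp_le_exp.mpr ?_)
                have hx' : x < 0 := lt_of_lt_of_le hx (by linarith)
                rw [abs_of_neg hx']; linarith
      _ = ENNReal.ofReal (∫ x in Set.Iio (-a), Real.exp (1/2) * Real.exp x) := by
          rw [← ofReal_integral_eq_lintegral_ofReal]
          · exact (((integrableOn_exp_Iic (-a)).mono_set Set.Iio_subset_Iic_self).const_mul _)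
          · exact Filter.Eventually.of_forall fun x => by positivity
      _ ≤ ENNReal.ofReal (Real.exp (1/2 - a)) := by
          rw [integral_const_mul]
          refine ENNReal.ofReal_le_ofReal ?_
          have h1 : (∫ x in Set.Iio (-a), Real.exp x) ≤ ∫ x in Set.Iic (-a), Real.exp x := by
            refine setIntegral_mono_set (integrableOn_exp_Iic (-a))
              (Filter.Eventually.of_forall fun x => (Real.exp_nonneg x))
              (HasSubset.Subset.eventuallyLE Set.Iio_subset_Iic_self)
          rw [integral_exp_Iic (-a)] at h1
          calc Real.exp (1/2) * ∫ x in Set.Iio (-a), Real.exp x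
              ≤ Real.exp (1/2) * Real.exp (-a) :=
                mul_le_mul_of_nonneg_left h1 (Real.exp_nonneg _)
            _ = Real.exp (1/2 - a) := by rw [← Real.exp_add]; ring_nf
  calc gaussianReal 0 1 {x : ℝ | a < |x|}
      ≤ gaussianReal 0 1 (Set.Iio (-a) ∪ Set.Ioi a) := measure_mono hsub
    _ ≤ gaussianReal 0 1 (Set.Iio (-a)) + gaussianReal 0 1 (Set.Ioi a) := measure_union_le _ _
    _ ≤ ENNReal.ofReal (Real.exp (1/2 - a)) + ENNReal.ofReal (Real.exp (1/2 - a)) :=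
        add_le_add hIio hIoi
    _ = ENNReal.ofReal (2 * Real.exp (1/2 - a)) := by
        rw [← ENNReal.ofReal_add (by positivity) (by positivity)]; ring_nf

lemma tsum_ofReal_geom_ne_top (C r : ℝ) (h0 : 0 ≤ r) (h1 : r < 1) :
    ∑' n : ℕ, ENNReal.ofReal (C * r ^ n) ≠ ⊤ := by
  have hle : ∀ n : ℕ, ENNReal.ofReal (C * r ^ n) ≤
      ENNReal.ofReal C * (ENNReal.ofReal r) ^ n := fun n => by
    rw [← ENNReal.ofReal_pow h0, ← ENNReal.ofReal_mul' (by positivity)]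
  refine ne_top_of_le_ne_top ?_ (ENNReal.tsum_le_tsum hle)
  rw [ENNReal.tsum_mul_left, ENNReal.tsum_geometric]
  refine ENNReal.mul_ne_top ENNReal.ofReal_ne_top ?_
  simp only [ne_eq, ENNReal.inv_eq_top, tsub_eq_zero_iff_le, not_le]
  exact ENNReal.ofReal_lt_one.mpr h1

lemma iIndepFun_congr_ae_zero {Ω : Type*} [MeasurableSpace Ω] {P : Measure Ω}
    [IsProbabilityMeasure P] {f g : ℕ → Ω → ℝ}
    (h : iIndepFun f P)
    (hae : ∀ i, 1 ≤ i → f i =ᵐ[P] g i) (h0 : g 0 = fun _ => (0:ℝ)) :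
    iIndepFun g P := by
  rw [iIndepFun_iff_measure_inter_preimage_eq_mul] at h ⊢
  have key : ∀ (S : Finset ℕ), 0 ∉ S → ∀ (sets : ℕ → Set ℝ),
      (∀ i ∈ S, MeasurableSet (sets i)) →
      P (⋂ i ∈ S, g i ⁻¹' sets i) = ∏ i ∈ S, P (g i ⁻¹' sets i) := by
    intro S hS sets hsets
    have hae' : ∀ᵐ ω ∂P, ∀ i ∈ (↑S : Set ℕ), f i ω = g i ω := by
      rw [MeasureTheory.ae_ball_iff S.countable_toSet]
      intro i hi
      rw [Finset.mem_coe] at hi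
      exact hae i (Nat.one_le_iff_ne_zero.mpr (fun h' => hS (h' ▸ hi)))
    have hI : (⋂ i ∈ S, f i ⁻¹' sets i) =ᵐ[P] (⋂ i ∈ S, g i ⁻¹' sets i) := by
      filter_upwards [hae'] with ω hω
      show (ω ∈ ⋂ i ∈ S, f i ⁻¹' sets i) = (ω ∈ ⋂ i ∈ S, g i ⁻¹' sets i)
      simp only [Set.mem_iInter, Set.mem_preimage, eq_iff_iff]
      constructor <;> intro hmem i hi
      · rw [← hω i (Finset.mem_coe.mpr hi)]; exact hmem i hi
      · rw [hω i (Finset.mem_coe.mpr hi)]; exact hmem i hi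
    rw [← measure_congr hI, h S hsets]
    refine Finset.prod_congr rfl fun i hi => measure_congr ?_
    filter_upwards [hae'] with ω hω
    show (ω ∈ f i ⁻¹' sets i) = (ω ∈ g i ⁻¹' sets i)
    simp only [Set.mem_preimage, eq_iff_iff, hω i (Finset.mem_coe.mpr hi)]
  intro S sets hsets
  by_cases h0S : 0 ∈ S
  · by_cases hmem : (0:ℝ) ∈ sets 0
    · have hpre : g 0 ⁻¹' sets 0 = Set.univ := by
        rw [h0]; ext ω; simp [hmem]
      have hS' : S = insert 0 (S.erase 0) := (Finset.insert_erase h0S).symm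
      rw [hS', Finset.set_biInter_insert, Finset.prod_insert (Finset.notMem_erase 0 S), hpre,
        Set.univ_inter, measure_univ, one_mul]
      exact key _ (Finset.notMem_erase 0 S) sets (fun i hi => hsets i (Finset.mem_of_mem_erase hi))
    · have hpre : g 0 ⁻¹' sets 0 = ∅ := by
        rw [h0]; ext ω; simp [hmem]
      rw [Finset.prod_eq_zero h0S (by rw [hpre]; exact measure_empty)]
      exact measure_mono_null (Set.biInter_subset_of_mem h0S) (by rw [hpre]; exact measure_empty)
  · exact key S h0S sets hsets

lemma anticoncentration {Ω : Type*} [MeasurableSpace Ω] (P : Measure Ω) [IsProbabilityMeasure P]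
    {φ W : Ω → ℝ} (hφ : Measurable φ) (hW : Measurable W) (hind : IndepFun φ W P)
    (hlaw : Measure.map φ P = gaussianReal 0 1) {b : ℝ} (hb : b ≠ 0) (r : ℝ) :
    P {ω | |b * φ ω + W ω| < r} ≤
      ENNReal.ofReal ((Real.sqrt (2 * π * b^2))⁻¹ * (2*r)) := by
  set vb : ℝ≥0 := ⟨b^2, sq_nonneg b⟩ with hvb
  have hvbne : vb ≠ 0 := by
    simp only [hvb, ne_eq, ← NNReal.coe_eq_zero, NNReal.coe_mk]
    exact fun h => pow_ne_zero 2 hb (by have := congrArg NNReal.toReal h; exact this)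
  have hpair := (indepFun_iff_map_prod_eq_prod_map_map hφ.aemeasurable hW.aemeasurable).1 hind
  have hA : MeasurableSet {p : ℝ × ℝ | |b * p.1 + p.2| < r} := by
    have : Continuous fun p : ℝ × ℝ => |b * p.1 + p.2| := by continuity
    exact measurableSet_lt this.measurable measurable_const
  have h1 : P {ω | |b * φ ω + W ω| < r}
      = Measure.map (fun ω => (φ ω, W ω)) P {p : ℝ × ℝ | |b * p.1 + p.2| < r} := by
    rw [Measure.map_apply (hφ.prodMk hW) hA]
    rfl
  rw [h1, hpair, Measure.prod_apply_symm hA]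
  have hslice : ∀ w : ℝ, (Measure.map φ P) ((fun x => (x, w)) ⁻¹' {p : ℝ × ℝ | |b * p.1 + p.2| < r})
      ≤ ENNReal.ofReal ((Real.sqrt (2 * π * b^2))⁻¹ * (2*r)) := by
    intro w
    have hset : ((fun x => (x, w)) ⁻¹' {p : ℝ × ℝ | |b * p.1 + p.2| < r})
        = (fun x => b * x + w) ⁻¹' (Set.Ioo (-r) r) := by
      ext x
      simp only [Set.mem_preimage, Set.mem_setOf_eq, Set.mem_Ioo, abs_lt]
    rw [hset, hlaw]
    have hmeas : Measurable (fun x : ℝ => b * x + w) := by fun_prop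
    rw [← Measure.map_apply hmeas measurableSet_Ioo]
    have hmap : Measure.map (fun x : ℝ => b * x + w) (gaussianReal 0 1)
        = gaussianReal w vb := by
      have : (fun x : ℝ => b * x + w) = (fun y : ℝ => y + w) ∘ (fun x : ℝ => b * x) := rfl
      rw [this, ← Measure.map_map (measurable_add_const w) (measurable_const_mul b),
        gaussianReal_map_const_mul b, gaussianReal_map_add_const w]
      norm_num
      rfl
    rw [hmap]
    have := gauss_Ioo_le w vb hvbne (-r) r
    calc gaussianReal w vb (Set.Ioo (-r) r)
        ≤ ENNReal.ofReal ((Real.sqrt (2 * π * vb))⁻¹ * (r - (-r))) := this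
      _ = ENNReal.ofReal ((Real.sqrt (2 * π * b^2))⁻¹ * (2*r)) := by
          show ENNReal.ofReal ((Real.sqrt (2 * π * b^2))⁻¹ * (r - (-r))) = _; rw [sub_neg_eq_add, ← two_mul]
  calc ∫⁻ w, (Measure.map φ P) ((fun x => (x, w)) ⁻¹' {p : ℝ × ℝ | |b * p.1 + p.2| < r})
        ∂(Measure.map W P)
      ≤ ∫⁻ _, ENNReal.ofReal ((Real.sqrt (2 * π * b^2))⁻¹ * (2*r)) ∂(Measure.map W P) :=
        lintegral_mono fun w => hslice w
    _ = ENNReal.ofReal ((Real.sqrt (2 * π * b^2))⁻¹ * (2*r)) := by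
        rw [lintegral_const]
        have : IsProbabilityMeasure (Measure.map W P) := Measure.isProbabilityMeasure_map hW.aemeasurable
        rw [measure_univ, mul_one]

/-- For the nonstationary AR(1) process `X_t = ρ X_{t-1} + √(ρ²-1) ε_t`, `X_0 = 0`,
with `|ρ| > 1` and i.i.d. `N(0,1)` noise, `(1/n) ln|X_n| → ln|ρ|` almost surely. -/
theorem ar1_nonstationary_lyapunov
    {Ω : Type*} [MeasurableSpace Ω] (P : Measure Ω) [IsProbabilityMeasure P]
    (ρ : ℝ) (hρ : 1 < |ρ|) (X ε : ℕ → Ω → ℝ)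
    (hindep : iIndepFun ε P)
    (hε : ∀ t : ℕ, 1 ≤ t → Measure.map (ε t) P = gaussianReal 0 1)
    (hX0 : X 0 = fun _ => 0)
    (hrec : ∀ t : ℕ, 1 ≤ t →
      X t = fun ω => ρ * X (t - 1) ω + Real.sqrt (ρ ^ 2 - 1) * ε t ω) :
    ∀ᵐ ω ∂P, Tendsto (fun n : ℕ => (1 / (n : ℝ)) * Real.log |X n ω|)
      atTop (nhds (Real.log |ρ|)) := by
  have hρ0 : ρ ≠ 0 := fun h => by simp [h] at hρ; linarith
  have hρ2 : 0 < ρ^2 - 1 := by nlinarith [sq_abs ρ, abs_nonneg ρ]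
  set c : ℝ := Real.sqrt (ρ^2 - 1) with hc
  have hcpos : 0 < c := Real.sqrt_pos.mpr hρ2
  -- modify ε to be measurable
  have haem : ∀ t, 1 ≤ t → AEMeasurable (ε t) P := by
    intro t ht
    by_contra h
    have h2 := Measure.map_of_not_aemeasurable h
    rw [hε t ht] at h2
    exact (IsProbabilityMeasure.ne_zero (gaussianReal 0 1)) h2
  have hchoice : ∀ t : ℕ, ∃ g : Ω → ℝ,
      (1 ≤ t → (ε t =ᵐ[P] g) ∧ Measurable g ∧ Measure.map g P = gaussianReal 0 1) ∧
      (t = 0 → g = fun _ => (0:ℝ)) := by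
    intro t
    rcases Nat.eq_zero_or_pos t with h0 | h1
    · exact ⟨fun _ => 0, fun ht => by omega, fun _ => rfl⟩
    · refine ⟨(haem t h1).mk (ε t), fun _ => ⟨(haem t h1).ae_eq_mk, (haem t h1).measurable_mk, ?_⟩,
        fun h0 => by omega⟩
      rw [← Measure.map_congr (haem t h1).ae_eq_mk]
      exact hε t h1
  choose ε' hε' using hchoice
  have hmeas' : ∀ t, Measurable (ε' t) := by
    intro t
    rcases Nat.eq_zero_or_pos t with h0 | h1
    · rw [(hε' t).2 h0]; exact measurable_const
    · exact ((hε' t).1 h1).2.1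
  have hlaw' : ∀ t, 1 ≤ t → Measure.map (ε' t) P = gaussianReal 0 1 :=
    fun t ht => ((hε' t).1 ht).2.2
  have hind' : iIndepFun ε' P :=
    iIndepFun_congr_ae_zero hindep (fun i hi => ((hε' i).1 hi).1) ((hε' 0).2 rfl)
  -- the explicit solution
  set S : ℕ → Ω → ℝ := fun n ω => c * ∑ t ∈ Finset.Icc 1 n, ρ^(n-t) * ε' t ω with hSdef
  have hSmeas : ∀ n, Measurable (S n) :=
    fun n => (Finset.measurable_sum _ (fun t _ => ((hmeas' t).const_mul _))).const_mul c
  have hXS : ∀ᵐ ω ∂P, ∀ n, 1 ≤ n → X n ω = S n ω := by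
    have hall : ∀ᵐ ω ∂P, ∀ t, 1 ≤ t → ε t ω = ε' t ω := by
      rw [ae_all_iff]
      intro t
      rcases Nat.eq_zero_or_pos t with h0 | h1
      · filter_upwards with ω ht; omega
      · filter_upwards [((hε' t).1 h1).1] with ω hω _; exact hω
    filter_upwards [hall] with ω hω
    intro n hn
    induction n with
    | zero => omega
    | succ m ih =>
      by_cases hm : m = 0
      · subst hm
        rw [hrec 1 le_rfl]
        simp only [hX0, hSdef]
        rw [hω 1 le_rfl]
        simp [Finset.Icc_self]
      · have hm1 : 1 ≤ m := by omega
        rw [hrec (m+1) (by omega)]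
        simp only [Nat.add_sub_cancel]
        rw [ih hm1, hω (m+1) (by omega)]
        simp only [hSdef]
        rw [Finset.sum_Icc_succ_top (by omega : 1 ≤ m+1)]
        have hterm : ∀ t ∈ Finset.Icc 1 m, ρ^(m+1-t) * ε' t ω = ρ * (ρ^(m-t) * ε' t ω) := by
          intro t ht
          have h2 : t ≤ m := (Finset.mem_Icc.mp ht).2
          rw [show m+1-t = (m-t)+1 by omega, pow_succ]
          ring
        rw [Finset.sum_congr rfl hterm, ← Finset.mul_sum]
        simp only [Nat.sub_self, pow_zero, one_mul]
        ring
  -- Borel-Cantelli upper: noise eventually ≤ t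
  have hBCup : ∀ᵐ ω ∂P, ∀ᶠ t in atTop, |ε' t ω| ≤ (t:ℝ) := by
    have hsum : ∑' t : ℕ, P {ω | (t:ℝ) < |ε' t ω|} ≠ ⊤ := by
      refine ne_top_of_le_ne_top (tsum_ofReal_geom_ne_top (2 * Real.exp (1/2))
        (Real.exp (-1)) (Real.exp_nonneg _) (Real.exp_lt_one_iff.mpr (by norm_num)))
        (ENNReal.tsum_le_tsum fun t => ?_)
      rcases Nat.eq_zero_or_pos t with h0 | h1
      · subst h0
        refine le_trans prob_le_one ?_
        rw [pow_zero, mul_one]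
        refine ENNReal.one_le_ofReal.mpr ?_
        nlinarith [Real.exp_one_gt_d9, Real.exp_nonneg (1/2:ℝ),
          Real.one_le_exp (by norm_num : (0:ℝ) ≤ 1/2)]
      · have hset : MeasurableSet {x : ℝ | (t:ℝ) < |x|} :=
          measurableSet_lt measurable_const measurable_abs
        have : P {ω | (t:ℝ) < |ε' t ω|} = Measure.map (ε' t) P {x : ℝ | (t:ℝ) < |x|} := by
          rw [Measure.map_apply (hmeas' t) hset]; rfl
        rw [this, hlaw' t h1]
        calc gaussianReal 0 1 {x : ℝ | (t:ℝ) < |x|}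
            ≤ ENNReal.ofReal (2 * Real.exp (1/2 - t)) := gauss_tail _ (Nat.cast_nonneg t)
          _ = ENNReal.ofReal (2 * Real.exp (1/2) * Real.exp (-1) ^ t) := by
              congr 1
              rw [← Real.exp_nat_mul, mul_assoc, ← Real.exp_add]
              ring_nf
    filter_upwards [ae_eventually_notMem hsum] with ω hω
    filter_upwards [hω] with t ht
    simpa using ht
  -- Borel-Cantelli lower, for each k
  have hBClow : ∀ᵐ ω ∂P, ∀ k : ℕ, ∀ᶠ n : ℕ in atTop,
      |ρ|^n * Real.exp (-(1/(k+1)) * n) ≤ |S n ω| := by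
    rw [ae_all_iff]
    intro k
    set δ : ℝ := 1/(k+1) with hδ
    have hδpos : 0 < δ := by positivity
    have hsum : ∑' n : ℕ, P {ω | |S n ω| < |ρ|^n * Real.exp (-δ * n)} ≠ ⊤ := by
      refine ne_top_of_le_ne_top (tsum_ofReal_geom_ne_top (2 * |ρ| / c + 1)
        (Real.exp (-δ)) (Real.exp_nonneg _) (Real.exp_lt_one_iff.mpr (by linarith)))
        (ENNReal.tsum_le_tsum fun n => ?_)
      have hexp : Real.exp (-δ * n) = Real.exp (-δ) ^ n := by
        rw [← Real.exp_nat_mul]; ring_nf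
      rcases Nat.eq_zero_or_pos n with h0 | h1
      · subst h0
        refine le_trans prob_le_one ?_
        rw [pow_zero, mul_one]
        refine ENNReal.one_le_ofReal.mpr ?_
        have : 0 ≤ 2 * |ρ| / c := by positivity
        linarith
      · -- decompose S n = b * ε' 1 + W
        set b : ℝ := c * ρ^(n-1) with hb
        have hbne : b ≠ 0 := by
          simp only [hb]
          exact mul_ne_zero (ne_of_gt hcpos) (pow_ne_zero _ hρ0)
        set W : Ω → ℝ := fun ω => c * ∑ t ∈ Finset.Icc 2 n, ρ^(n-t) * ε' t ω with hW
        have hWmeas : Measurable W :=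
          (Finset.measurable_sum _ (fun t _ => ((hmeas' t).const_mul _))).const_mul c
        have hIns : Finset.Icc 1 n = insert 1 (Finset.Icc 2 n) := by
          ext t; simp only [Finset.mem_Icc, Finset.mem_insert]; omega
        have hSdecomp : ∀ ω, S n ω = b * ε' 1 ω + W ω := by
          intro ω
          simp only [hSdef, hW, hb, hIns]
          rw [Finset.sum_insert (by simp [Finset.mem_Icc])]
          ring
        -- independence
        have hindW : IndepFun (ε' 1) W P := by
          have h1 : iIndepFun
              (fun i => (fun x : ℝ => ρ^(n-i) * x) ∘ ε' i) P :=
            hind'.comp _ (fun i => measurable_const_mul _)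
          have h2 : IndepFun (∑ j ∈ Finset.Icc 2 n, (fun x : ℝ => ρ^(n-j) * x) ∘ ε' j)
              ((fun x : ℝ => ρ^(n-1) * x) ∘ ε' 1) P := by
            refine h1.indepFun_finsetSum_of_notMem
              (fun i => (measurable_const_mul _).comp (hmeas' i)) ?_
            simp [Finset.mem_Icc]
          have h3 : IndepFun (ε' 1)
              (∑ j ∈ Finset.Icc 2 n, (fun x : ℝ => ρ^(n-j) * x) ∘ ε' j) P := by
            have h4 := (h2.symm.comp (φ := fun x : ℝ => (ρ^(n-1))⁻¹ * x) (ψ := id)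
              (measurable_const_mul _) measurable_id)
            convert h4 using 1
            funext ω
            simp only [Function.comp_apply, id_eq]
            field_simp
            rfl
          have h5 := h3.comp (φ := id) (ψ := fun x : ℝ => c * x)
            measurable_id (measurable_const_mul _)
          convert h5 using 1
          · rfl
          funext ω
          simp only [hW, Function.comp_apply, id_eq, Finset.sum_apply]
        have hkey := anticoncentration P (hmeas' 1) hWmeas hindW (hlaw' 1 le_rfl) hbne
          (|ρ|^n * Real.exp (-δ * n))
        have hsetEq : {ω | |S n ω| < |ρ|^n * Real.exp (-δ * n)}
            = {ω | |b * ε' 1 ω + W ω| < |ρ|^n * Real.exp (-δ * n)} := by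
          ext ω; simp only [Set.mem_setOf_eq, hSdecomp ω]
        rw [hsetEq]
        refine le_trans hkey (ENNReal.ofReal_le_ofReal ?_)
        rw [hexp] at *
        -- (√(2π b²))⁻¹ * (2 * (|ρ|^n e^{-δn})) ≤ (2|ρ|/c + 1) * e^{-δ}^n
        have hsqrt : |b| ≤ Real.sqrt (2 * π * b^2) := by
          rw [show 2 * π * b^2 = b^2 * (2*π) by ring, Real.sqrt_mul (sq_nonneg b),
            Real.sqrt_sq_eq_abs]
          nth_rewrite 1 [← mul_one |b|]
          refine mul_le_mul_of_nonneg_left ?_ (abs_nonneg b)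
          rw [show (1:ℝ) = Real.sqrt 1 by simp]
          exact Real.sqrt_le_sqrt (by nlinarith [Real.pi_gt_three])
        have hbabs : |b| = c * |ρ|^(n-1) := by
          rw [hb, abs_mul, abs_of_pos hcpos, abs_pow]
        have hbpos : 0 < |b| := abs_pos.mpr hbne
        have hinv : (Real.sqrt (2 * π * b^2))⁻¹ ≤ |b|⁻¹ :=
          inv_anti₀ hbpos hsqrt
        calc (Real.sqrt (2 * π * b^2))⁻¹ * (2 * (|ρ|^n * Real.exp (-δ) ^ n))
            ≤ |b|⁻¹ * (2 * (|ρ|^n * Real.exp (-δ) ^ n)) := by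
              refine mul_le_mul_of_nonneg_right hinv (by positivity)
          _ ≤ (2 * |ρ| / c + 1) * Real.exp (-δ) ^ n := by
              have hpow : |ρ|^n = |ρ| * |ρ|^(n-1) := by
                rw [← pow_succ']
                congr 1
                omega
              have hpp : (0:ℝ) < |ρ|^(n-1) := by positivity
              have hE : (0:ℝ) ≤ Real.exp (-δ) ^ n := by positivity
              have heq : |b|⁻¹ * (2 * (|ρ|^n * Real.exp (-δ) ^ n))
                  = (2 * |ρ| / c) * Real.exp (-δ) ^ n := by
                rw [hbabs, hpow]
                field_simp
              rw [heq]
              nlinarith [hE]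
      done
    filter_upwards [ae_eventually_notMem hsum] with ω hω
    filter_upwards [hω] with n hn
    simpa [not_lt] using hn
  -- combine everything pointwise
  filter_upwards [hXS, hBCup, hBClow] with ω hXω hup hlow
  have hcongr : ∀ᶠ n : ℕ in atTop,
      (1/(n:ℝ)) * Real.log |X n ω| = (1/(n:ℝ)) * Real.log |S n ω| := by
    filter_upwards [eventually_ge_atTop 1] with n hn
    rw [hXω n hn]
  rw [tendsto_congr' hcongr]
  obtain ⟨T, hT⟩ := eventually_atTop.mp hup
  set C : ℝ := 1 + ∑ t ∈ Finset.range T, |ε' t ω| with hC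
  have hC1 : 1 ≤ C :=
    le_add_of_nonneg_right (Finset.sum_nonneg fun t _ => abs_nonneg _)
  have hCb : ∀ t : ℕ, 1 ≤ t → |ε' t ω| ≤ C * t := by
    intro t ht
    rcases le_or_gt T t with h | h
    · calc |ε' t ω| ≤ t := hT t h
        _ ≤ C * t := le_mul_of_one_le_left (Nat.cast_nonneg t) hC1
    · calc |ε' t ω| ≤ ∑ s ∈ Finset.range T, |ε' s ω| :=
          Finset.single_le_sum (f := fun s => |ε' s ω|) (fun s _ => abs_nonneg _) (Finset.mem_range.mpr h)
        _ ≤ C := by rw [hC]; linarith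
        _ ≤ C * t := le_mul_of_one_le_right (by linarith) (by exact_mod_cast ht)
  have hSub : ∀ n : ℕ, 1 ≤ n → |S n ω| ≤ (c * C) * n^2 * |ρ|^n := by
    intro n hn
    have hterm : ∀ t ∈ Finset.Icc 1 n, |ρ^(n-t) * ε' t ω| ≤ |ρ|^n * (C * n) := by
      intro t ht
      obtain ⟨ht1, ht2⟩ := Finset.mem_Icc.mp ht
      rw [abs_mul, abs_pow]
      refine mul_le_mul (pow_le_pow_right₀ (by linarith) (Nat.sub_le n t)) ?_
        (abs_nonneg _) (by positivity)
      calc |ε' t ω| ≤ C * t := hCb t ht1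
        _ ≤ C * n := by
            refine mul_le_mul_of_nonneg_left ?_ (by linarith)
            exact_mod_cast ht2
    have hstart : |S n ω| = c * |∑ t ∈ Finset.Icc 1 n, ρ^(n-t) * ε' t ω| := by
      simp only [hSdef]
      rw [abs_mul, abs_of_pos hcpos]
    calc |S n ω| = c * |∑ t ∈ Finset.Icc 1 n, ρ^(n-t) * ε' t ω| := hstart
      _ ≤ c * ∑ t ∈ Finset.Icc 1 n, |ρ^(n-t) * ε' t ω| :=
        mul_le_mul_of_nonneg_left (Finset.abs_sum_le_sum_abs _ _) hcpos.le
      _ ≤ c * ((Finset.Icc 1 n).card • (|ρ|^n * (C * n))) :=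
        mul_le_mul_of_nonneg_left (Finset.sum_le_card_nsmul _ _ _ hterm) hcpos.le
      _ = (c * C) * n^2 * |ρ|^n := by
        rw [Nat.card_Icc, nsmul_eq_mul]
        push_cast
        ring
  rw [tendsto_order]
  constructor
  · intro y hy
    obtain ⟨k, hk⟩ := exists_nat_one_div_lt (sub_pos.mpr hy)
    filter_upwards [hlow k, eventually_ge_atTop 1] with n hlbn hn1
    have hnpos : (0:ℝ) < n := by exact_mod_cast hn1
    have hposS : (0:ℝ) < |ρ|^n * Real.exp (-(1/(k+1)) * n) := by positivity
    have hlog : Real.log (|ρ|^n * Real.exp (-(1/(k+1)) * n)) ≤ Real.log |S n ω| :=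
      (Real.log_le_log_iff hposS (lt_of_lt_of_le hposS hlbn)).mpr hlbn
    rw [Real.log_mul (by positivity) (Real.exp_ne_zero _), Real.log_pow, Real.log_exp] at hlog
    have hexpand : (1/(n:ℝ)) * ((n:ℝ) * Real.log |ρ| + (-(1/((k:ℝ)+1)) * n))
        = Real.log |ρ| - 1/((k:ℝ)+1) := by
      field_simp
      ring
    calc y < Real.log |ρ| - 1/((k:ℝ)+1) := by linarith
      _ = (1/(n:ℝ)) * ((n:ℝ) * Real.log |ρ| + (-(1/((k:ℝ)+1)) * n)) := hexpand.symm
      _ ≤ (1/(n:ℝ)) * Real.log |S n ω| :=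
        mul_le_mul_of_nonneg_left hlog (by positivity)
  · intro y hy
    have h0 : Tendsto (fun n : ℕ => Real.log (c*C) / n) atTop (nhds 0) :=
      tendsto_const_div_atTop_nhds_zero_nat _
    have h1 : Tendsto (fun n : ℕ => Real.log n / n) atTop (nhds 0) :=
      (Real.isLittleO_log_id_atTop.tendsto_div_nhds_zero).comp tendsto_natCast_atTop_atTop
    have hg : Tendsto (fun n : ℕ =>
        Real.log |ρ| + (Real.log (c*C) / n + 2 * (Real.log n / n)))
        atTop (nhds (Real.log |ρ|)) := by
      have h2 := (h0.add (h1.const_mul 2)).const_add (Real.log |ρ|)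
      simpa using h2
    filter_upwards [hg.eventually (eventually_lt_nhds hy), hlow 0, eventually_ge_atTop 1]
      with n hgn hlbn hn1
    have hnpos : (0:ℝ) < n := by exact_mod_cast hn1
    have hposS : (0:ℝ) < |ρ|^n * Real.exp (-(1/((0:ℕ)+1)) * n) := by positivity
    have hSpos : (0:ℝ) < |S n ω| := lt_of_lt_of_le hposS hlbn
    have hub := hSub n hn1
    have hcCn : (0:ℝ) < (c * C) * n^2 := by positivity
    have hlog : Real.log |S n ω| ≤ Real.log ((c * C) * n^2 * |ρ|^n) :=
      (Real.log_le_log_iff hSpos (by positivity)).mpr hub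
    rw [Real.log_mul (by positivity) (by positivity), Real.log_mul (by positivity) (by positivity),
      Real.log_pow, Real.log_pow] at hlog
    -- hlog : log |S n ω| ≤ (log (c*C) + 2 * log n) + n * log |ρ|
    calc (1/(n:ℝ)) * Real.log |S n ω|
        ≤ (1/(n:ℝ)) * ((Real.log (c*C) + 2 * Real.log n) + n * Real.log |ρ|) :=
          mul_le_mul_of_nonneg_left hlog (by positivity)
      _ = Real.log |ρ| + (Real.log (c*C) / n + 2 * (Real.log n / n)) := by
          field_simp
          ring
      _ < y := hgn
end

section
/- Let v > 0, let m_v = (1/2)(ln v − ln 2 − γ), and let σ = π/(2√2) (so σ² = π²/8). The pushforward of the Gaussian measure N(0, v) on ℝ under the map y ↦ (ln|y| − m_v)/σ is the measure on ℝ with density g(x) = (1/2) √(π/2) exp( −(1/4) e^z + z/2 ) with respect to Lebesgue measure, where z = π x/√2 − γ. In particular this density does not depend on v. -/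
open MeasureTheory ProbabilityTheory Real Set
open scoped ENNReal NNReal

noncomputable section GumbelAux

/-- one-dimensional lintegral change of variables -/
lemma gumbel_lintegral_image {s : Set ℝ} {f : ℝ → ℝ} {f' : ℝ → ℝ}
    (hs : MeasurableSet s) (hf' : ∀ x ∈ s, HasDerivWithinAt f (f' x) s x)
    (hf : Set.InjOn f s) (g : ℝ → ENNReal) :
    ∫⁻ x in f '' s, g x = ∫⁻ x in s, ENNReal.ofReal |f' x| * g (f x) := by
  simpa only [ContinuousLinearMap.det_toSpanSingleton] using
    MeasureTheory.lintegral_image_eq_lintegral_abs_det_fderiv_mul volume hs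
      (fun x hx => (hf' x hx).hasFDerivWithinAt) hf g

variable {σ m : ℝ}

lemma gumbel_range_pos (hσ : 0 < σ) :
    (fun x : ℝ => Real.exp (σ * x + m)) '' Set.univ = Set.Ioi 0 := by
  rw [Set.image_univ]
  ext y
  constructor
  · rintro ⟨x, rfl⟩; exact Real.exp_pos _
  · intro hy
    exact ⟨(Real.log y - m) / σ, by
      show Real.exp _ = y
      rw [mul_div_cancel₀ _ hσ.ne', sub_add_cancel, Real.exp_log hy]⟩

lemma gumbel_range_neg (hσ : 0 < σ) :
    (fun x : ℝ => -Real.exp (σ * x + m)) '' Set.univ = Set.Iio 0 := by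
  have : (fun x : ℝ => -Real.exp (σ * x + m)) = (fun y => -y) ∘ (fun x => Real.exp (σ * x + m)) := rfl
  rw [this, Set.image_comp, gumbel_range_pos hσ]
  ext y
  simp only [Set.mem_image, Set.mem_Ioi, Set.mem_Iio]
  constructor
  · rintro ⟨x, hx, rfl⟩; linarith
  · intro hy; exact ⟨-y, by linarith, by ring⟩

lemma gumbel_hasDeriv (x : ℝ) :
    HasDerivAt (fun x : ℝ => Real.exp (σ * x + m)) (Real.exp (σ * x + m) * σ) x := by
  have h : HasDerivAt (fun x : ℝ => σ * x + m) σ x := by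
    simpa using ((hasDerivAt_id x).const_mul σ).add_const m
  exact h.exp

lemma gumbel_inj (hσ : 0 < σ) : Function.Injective (fun x : ℝ => Real.exp (σ * x + m)) := by
  intro a b hab
  have := Real.exp_injective hab
  have := add_right_cancel this
  exact mul_left_cancel₀ hσ.ne' this

end GumbelAux

lemma gumbel_pdf_eq (v : NNReal) (hv : 0 < v) (x : ℝ) :
    2 * (Real.exp (Real.pi / (2 * Real.sqrt 2) * x
          + (Real.log v - Real.log 2 - Real.eulerMascheroniConstant) / 2)
        * (Real.pi / (2 * Real.sqrt 2))
        * gaussianPDFReal 0 v (Real.exp (Real.pi / (2 * Real.sqrt 2) * x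
          + (Real.log v - Real.log 2 - Real.eulerMascheroniConstant) / 2)))
    = (1 / 2) * Real.sqrt (Real.pi / 2)
        * Real.exp (-(1 / 4) * Real.exp (Real.pi * x / Real.sqrt 2 - Real.eulerMascheroniConstant)
          + (Real.pi * x / Real.sqrt 2 - Real.eulerMascheroniConstant) / 2) := by
  have hv' : (0:ℝ) < v := hv
  have h2 : (0:ℝ) < Real.sqrt 2 := Real.sqrt_pos.mpr two_pos
  have hπ := Real.pi_pos
  have hsπ : (0:ℝ) < Real.sqrt Real.pi := Real.sqrt_pos.mpr hπ
  have hsv : (0:ℝ) < Real.sqrt v := Real.sqrt_pos.mpr hv'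
  set γ := Real.eulerMascheroniConstant with hγdef
  set σ := Real.pi / (2 * Real.sqrt 2) with hσdef
  set m := (Real.log v - Real.log 2 - γ) / 2 with hmdef
  set z := Real.pi * x / Real.sqrt 2 - γ with hzdef
  have hzσ : z = 2 * (σ * x) - γ := by
    rw [hzdef, hσdef]; field_simp
  have hE2 : Real.exp (σ * x + m) ^ 2 = Real.exp (2 * (σ * x)) * Real.exp (2 * m) := by
    rw [sq, ← Real.exp_add, ← Real.exp_add]; ring_nf
  have h2m : Real.exp (2 * m) = (v : ℝ) * (Real.exp γ)⁻¹ / 2 := by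
    rw [hmdef, show 2 * ((Real.log v - Real.log 2 - γ) / 2) = Real.log v - Real.log 2 - γ by ring,
      Real.exp_sub, Real.exp_sub, Real.exp_log hv', Real.exp_log two_pos]
    field_simp
  have hexp : -(Real.exp (σ * x + m) - 0) ^ 2 / (2 * (v : ℝ)) = -(1/4) * Real.exp z := by
    rw [sub_zero, hE2, h2m, hzσ, Real.exp_sub]
    have h3 := (Real.exp_pos γ).ne'
    field_simp
    ring
  have hem : Real.exp m = Real.sqrt v * (Real.sqrt 2)⁻¹ * Real.exp (-(γ/2)) := by
    have h1 : Real.exp (Real.log v / 2) = Real.sqrt v := by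
      rw [← Real.log_sqrt hv'.le, Real.exp_log hsv]
    have h2' : Real.exp (Real.log 2 / 2) = Real.sqrt 2 := by
      rw [← Real.log_sqrt (by norm_num : (0:ℝ) ≤ 2), Real.exp_log h2]
    rw [hmdef, show (Real.log v - Real.log 2 - γ) / 2
        = Real.log v / 2 - Real.log 2 / 2 + (-(γ/2)) by ring,
      Real.exp_add, Real.exp_sub, h1, h2']
    ring
  have hsqrt2πv : Real.sqrt (2 * Real.pi * (v:ℝ)) = Real.sqrt 2 * Real.sqrt Real.pi * Real.sqrt v := by
    rw [Real.sqrt_mul (by positivity), Real.sqrt_mul (by norm_num : (0:ℝ) ≤ 2)]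
  have hsqrtπ2 : Real.sqrt (Real.pi / 2) = Real.sqrt Real.pi / Real.sqrt 2 := by
    rw [Real.sqrt_div hπ.le]
  have hz2 : Real.exp (z / 2) = Real.exp (σ * x) * Real.exp (-(γ/2)) := by
    rw [← Real.exp_add]; congr 1; rw [hzσ]; ring
  simp only [gaussianPDFReal]
  rw [hexp, Real.exp_add (σ * x) m, hem, hsqrt2πv, hsqrtπ2,
    Real.exp_add (-(1/4) * Real.exp z) (z/2), hz2]
  rw [hσdef]
  have h22 : Real.sqrt 2 * Real.sqrt 2 = 2 := Real.mul_self_sqrt (by norm_num)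
  have hππ : Real.sqrt Real.pi * Real.sqrt Real.pi = Real.pi := Real.mul_self_sqrt hπ.le
  have he1 := (Real.exp_pos (σ * x)).ne'
  have he2 := (Real.exp_pos (-(γ/2))).ne'
  have he3 := (Real.exp_pos (-(1/4) * Real.exp z)).ne'
  field_simp
  linear_combination (-Real.pi) * h22 + (-(Real.sqrt 2) ^ 2) * hππ

/-- The pushforward of `N(0,v)` under `y ↦ (ln|y| - m_v)/σ`, where
`m_v = (ln v - ln 2 - γ)/2` and `σ = π/(2√2)`, is the doubly exponential (Gumbel-type)
distribution with density `g(x) = (1/2)√(π/2) exp(-(1/4)e^z + z/2)`, `z = πx/√2 - γ`,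
independently of `v`. -/
theorem map_log_abs_gaussian_eq_gumbel (v : NNReal) (hv : 0 < v) :
    Measure.map
      (fun y : ℝ => (Real.log |y|
          - (Real.log v - Real.log 2 - Real.eulerMascheroniConstant) / 2)
        / (Real.pi / (2 * Real.sqrt 2)))
      (gaussianReal 0 v)
    = volume.withDensity (fun x : ℝ => ENNReal.ofReal
        ((1 / 2) * Real.sqrt (Real.pi / 2)
          * Real.exp (-(1 / 4) * Real.exp (Real.pi * x / Real.sqrt 2
              - Real.eulerMascheroniConstant)
            + (Real.pi * x / Real.sqrt 2 - Real.eulerMascheroniConstant) / 2))) := by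
  have hv' : (0:ℝ) < v := hv
  have h2 : (0:ℝ) < Real.sqrt 2 := Real.sqrt_pos.mpr two_pos
  have hπ := Real.pi_pos
  set γ := Real.eulerMascheroniConstant with hγdef
  set σ := Real.pi / (2 * Real.sqrt 2) with hσdef
  have hσ : 0 < σ := by rw [hσdef]; positivity
  set m := (Real.log v - Real.log 2 - γ) / 2 with hmdef
  set T := fun y : ℝ => (Real.log |y| - m) / σ with hTdef
  set g : ℝ → ℝ≥0∞ := fun x => ENNReal.ofReal
      ((1 / 2) * Real.sqrt (Real.pi / 2)
        * Real.exp (-(1 / 4) * Real.exp (Real.pi * x / Real.sqrt 2 - γ)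
          + (Real.pi * x / Real.sqrt 2 - γ) / 2)) with hgdef
  have hT : Measurable T := by
    rw [hTdef]
    exact ((Real.measurable_log.comp measurable_abs).sub_const m).div_const σ
  refine Measure.ext fun s hs => ?_
  rw [Measure.map_apply hT hs, withDensity_apply _ hs]
  set F : ℝ → ℝ≥0∞ := Set.indicator s (fun _ => 1) with hFdef
  have hFm : Measurable F := measurable_const.indicator hs
  have hL : (gaussianReal 0 v) (T ⁻¹' s) = ∫⁻ y, gaussianPDF 0 v y * F (T y) := by
    rw [gaussianReal_of_var_ne_zero 0 hv.ne', withDensity_apply _ (hT hs),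
      ← lintegral_indicator (hT hs)]
    refine lintegral_congr fun y => ?_
    rw [hFdef]
    by_cases h : T y ∈ s
    · rw [Set.indicator_of_mem (Set.mem_preimage.mpr h), Set.indicator_of_mem h, mul_one]
    · rw [Set.indicator_of_notMem (fun hc => h (Set.mem_preimage.mp hc)),
        Set.indicator_of_notMem h, mul_zero]
  have hR : ∫⁻ x in s, g x = ∫⁻ x, g x * F x := by
    rw [← lintegral_indicator hs]
    refine lintegral_congr fun x => ?_
    rw [hFdef]
    by_cases h : x ∈ s
    · rw [Set.indicator_of_mem h, Set.indicator_of_mem h, mul_one]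
    · rw [Set.indicator_of_notMem h, Set.indicator_of_notMem h, mul_zero]
  rw [hL, hR]
  -- split the integral at 0
  rw [← lintegral_add_compl (fun y => gaussianPDF 0 v y * F (T y)) (measurableSet_Ioi (a := (0:ℝ)))]
  have hIic : ∫⁻ y in (Set.Ioi (0:ℝ))ᶜ, gaussianPDF 0 v y * F (T y)
      = ∫⁻ y in Set.Iio 0, gaussianPDF 0 v y * F (T y) := by
    rw [compl_Ioi]
    exact (setLIntegral_congr Iio_ae_eq_Iic).symm
  rw [hIic]
  have hderiv : ∀ x ∈ (Set.univ : Set ℝ), HasDerivWithinAt (fun x => Real.exp (σ * x + m))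
      (Real.exp (σ * x + m) * σ) Set.univ x := fun x _ => (gumbel_hasDeriv x).hasDerivWithinAt
  have hpos : ∫⁻ y in Set.Ioi (0:ℝ), gaussianPDF 0 v y * F (T y)
      = ∫⁻ x, ENNReal.ofReal (Real.exp (σ * x + m) * σ)
          * (gaussianPDF 0 v (Real.exp (σ * x + m)) * F x) := by
    rw [← gumbel_range_pos hσ (m := m),
      gumbel_lintegral_image MeasurableSet.univ hderiv ((gumbel_inj hσ).injOn) _,
      setLIntegral_univ]
    refine lintegral_congr fun x => ?_
    have hT' : T (Real.exp (σ * x + m)) = x := by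
      rw [hTdef]
      simp only
      rw [abs_of_pos (Real.exp_pos _), Real.log_exp, add_sub_cancel_right,
        mul_div_cancel_left₀ _ hσ.ne']
    rw [hT', abs_of_pos (by positivity)]
  have hnegderiv : ∀ x ∈ (Set.univ : Set ℝ), HasDerivWithinAt (fun x => -Real.exp (σ * x + m))
      (-(Real.exp (σ * x + m) * σ)) Set.univ x :=
    fun x _ => ((gumbel_hasDeriv x).neg).hasDerivWithinAt
  have hneginj : Function.Injective (fun x : ℝ => -Real.exp (σ * x + m)) :=
    neg_injective.comp (gumbel_inj hσ)
  have hneg : ∫⁻ y in Set.Iio (0:ℝ), gaussianPDF 0 v y * F (T y)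
      = ∫⁻ x, ENNReal.ofReal (Real.exp (σ * x + m) * σ)
          * (gaussianPDF 0 v (Real.exp (σ * x + m)) * F x) := by
    rw [← gumbel_range_neg hσ (m := m),
      gumbel_lintegral_image MeasurableSet.univ hnegderiv hneginj.injOn _,
      setLIntegral_univ]
    refine lintegral_congr fun x => ?_
    have hT' : T (-Real.exp (σ * x + m)) = x := by
      rw [hTdef]
      simp only
      rw [abs_neg, abs_of_pos (Real.exp_pos _), Real.log_exp, add_sub_cancel_right,
        mul_div_cancel_left₀ _ hσ.ne']
    have hpdf : gaussianPDF 0 v (-Real.exp (σ * x + m)) = gaussianPDF 0 v (Real.exp (σ * x + m)) := by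
      simp [gaussianPDF, gaussianPDFReal, neg_sq]
    rw [hT', hpdf, abs_neg, abs_of_pos (by positivity)]
  have hmeas : Measurable (fun x => ENNReal.ofReal (Real.exp (σ * x + m) * σ)
      * (gaussianPDF 0 v (Real.exp (σ * x + m)) * F x)) := by
    have h1 : Measurable fun x : ℝ => Real.exp (σ * x + m) :=
      (Real.continuous_exp.comp ((continuous_const.mul continuous_id).add continuous_const)).measurable
    exact ((h1.mul_const σ).ennreal_ofReal).mul
      (((measurable_gaussianPDF 0 v).comp h1).mul hFm)
  rw [hpos, hneg, ← lintegral_add_left hmeas]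
  refine lintegral_congr fun x => ?_
  have hnn1 : (0:ℝ) ≤ Real.exp (σ * x + m) * σ := by positivity
  have hnn2 : (0:ℝ) ≤ gaussianPDFReal 0 v (Real.exp (σ * x + m)) := gaussianPDFReal_nonneg 0 v _
  have step1 : ENNReal.ofReal (Real.exp (σ * x + m) * σ)
      * (gaussianPDF 0 v (Real.exp (σ * x + m)) * F x)
      = ENNReal.ofReal (Real.exp (σ * x + m) * σ * gaussianPDFReal 0 v (Real.exp (σ * x + m))) * F x := by
    rw [gaussianPDF, ← mul_assoc, ← ENNReal.ofReal_mul hnn1]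
  rw [step1, ← add_mul, ← ENNReal.ofReal_add (by positivity) (by positivity),
    show Real.exp (σ * x + m) * σ * gaussianPDFReal 0 v (Real.exp (σ * x + m))
        + Real.exp (σ * x + m) * σ * gaussianPDFReal 0 v (Real.exp (σ * x + m))
      = 2 * (Real.exp (σ * x + m) * σ * gaussianPDFReal 0 v (Real.exp (σ * x + m))) by ring]
  rw [hgdef, hmdef, hσdef, hγdef]
  rw [gumbel_pdf_eq v hv x]
end

section
/- Let g(x) = (1/2) √(π/2) exp( −(1/4) e^z + z/2 ) where z = π x/√2 − γ and γ is the Euler–Mascheroni constant. Then ∫_ℝ g(x) dx = 1, ∫_ℝ x g(x) dx = 0, and ∫_ℝ x² g(x) dx = 1; that is, g is a probability density with mean 0 and variance 1. -/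
open MeasureTheory Real Set Filter Topology

namespace GumbelAux

lemma abs_log_pow_le {u δ : ℝ} (hu : 0 < u) (hδ : 0 < δ) (m : ℕ) :
    |Real.log u| ^ m ≤ (u ^ (-(δ * m)) + u ^ (δ * m)) / δ ^ m := by
  have hpow : ∀ c : ℝ, (u ^ c) ^ m = u ^ (c * m) := fun c => by
    rw [← Real.rpow_natCast (u ^ c) m, ← Real.rpow_mul hu.le]
  have hδm : (0:ℝ) < δ ^ m := pow_pos hδ m
  rcases le_or_gt 1 u with h | h
  · have h0 : 0 ≤ Real.log u := Real.log_nonneg h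
    have key : Real.log u ≤ u ^ δ / δ := by
      have h1 : Real.log (u ^ δ) ≤ u ^ δ - 1 :=
        Real.log_le_sub_one_of_pos (Real.rpow_pos_of_pos hu δ)
      rw [Real.log_rpow hu] at h1
      rw [le_div_iff₀ hδ]
      nlinarith [Real.rpow_pos_of_pos hu δ]
    calc |Real.log u| ^ m = (Real.log u) ^ m := by rw [abs_of_nonneg h0]
      _ ≤ (u ^ δ / δ) ^ m := by gcongr
      _ = u ^ (δ * m) / δ ^ m := by rw [div_pow, hpow]
      _ ≤ (u ^ (-(δ * m)) + u ^ (δ * m)) / δ ^ m := by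
          gcongr
          nlinarith [Real.rpow_pos_of_pos hu (-(δ * m))]
  · have h0 : Real.log u < 0 := Real.log_neg hu h
    have key : -Real.log u ≤ u ^ (-δ) / δ := by
      have h1 : Real.log (u ^ (-δ)) ≤ u ^ (-δ) - 1 :=
        Real.log_le_sub_one_of_pos (Real.rpow_pos_of_pos hu _)
      rw [Real.log_rpow hu] at h1
      rw [le_div_iff₀ hδ]
      nlinarith [Real.rpow_pos_of_pos hu (-δ)]
    calc |Real.log u| ^ m = (-Real.log u) ^ m := by rw [abs_of_neg h0]
      _ ≤ (u ^ (-δ) / δ) ^ m := by gcongr; linarith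
      _ = u ^ (-δ * m) / δ ^ m := by rw [div_pow, hpow]
      _ ≤ (u ^ (-(δ * m)) + u ^ (δ * m)) / δ ^ m := by
          rw [neg_mul]
          gcongr
          nlinarith [Real.rpow_pos_of_pos hu (δ * m)]

lemma integrable_aux {c : ℝ} (hc : -1 < c) (m : ℕ) :
    IntegrableOn (fun u : ℝ => Real.exp (-u) * u ^ c * |Real.log u| ^ m) (Ioi 0) := by
  set δ : ℝ := (c + 1) / (m + 1) with hδdef
  have hδ : 0 < δ := div_pos (by linarith) (by positivity)
  have hcm : -1 < c - δ * m := by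
    have : δ * m < c + 1 := by
      rw [hδdef]
      rw [div_mul_eq_mul_div, div_lt_iff₀ (by positivity)]
      nlinarith [Nat.cast_nonneg (α := ℝ) m]
    linarith
  have hI1 : IntegrableOn (fun u : ℝ => Real.exp (-u) * u ^ (c - δ * m)) (Ioi 0) := by
    have := Real.GammaIntegral_convergent (s := c - δ * m + 1) (by linarith)
    simpa using this
  have hI2 : IntegrableOn (fun u : ℝ => Real.exp (-u) * u ^ (c + δ * m)) (Ioi 0) := by
    have := Real.GammaIntegral_convergent (s := c + δ * m + 1) (by nlinarith [mul_nonneg hδ.le (Nat.cast_nonneg (α := ℝ) m)])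
    simpa using this
  have hbound : IntegrableOn
      (fun u : ℝ => (Real.exp (-u) * u ^ (c - δ * m) + Real.exp (-u) * u ^ (c + δ * m)) / δ ^ m)
      (Ioi 0) := ((hI1.add hI2).div_const _)
  refine hbound.mono' ?_ ?_
  · apply ContinuousOn.aestronglyMeasurable ?_ measurableSet_Ioi
    apply ContinuousOn.mul
    · exact (continuousOn_id.neg.rexp).mul
        (ContinuousOn.rpow_const continuousOn_id (fun x hx => Or.inl (ne_of_gt hx)))
    · exact (ContinuousOn.abs (Real.continuousOn_log.mono (fun x hx => ne_of_gt hx))).pow m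
  · filter_upwards [ae_restrict_mem measurableSet_Ioi] with u hu
    have hu : (0:ℝ) < u := hu
    have h1 : |Real.log u| ^ m ≤ (u ^ (-(δ * m)) + u ^ (δ * m)) / δ ^ m :=
      abs_log_pow_le hu hδ m
    have he : (0:ℝ) < Real.exp (-u) := Real.exp_pos _
    have huc : (0:ℝ) < u ^ c := Real.rpow_pos_of_pos hu c
    rw [Real.norm_eq_abs, abs_of_nonneg (by positivity)]
    calc Real.exp (-u) * u ^ c * |Real.log u| ^ m
        ≤ Real.exp (-u) * u ^ c * ((u ^ (-(δ * m)) + u ^ (δ * m)) / δ ^ m) := by gcongr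
      _ = (Real.exp (-u) * (u ^ c * u ^ (-(δ * m))) + Real.exp (-u) * (u ^ c * u ^ (δ * m))) / δ ^ m := by
          ring
      _ = (Real.exp (-u) * u ^ (c - δ * m) + Real.exp (-u) * u ^ (c + δ * m)) / δ ^ m := by
          rw [← Real.rpow_add hu, ← Real.rpow_add hu]
          ring_nf

noncomputable def I (k : ℕ) (s : ℝ) : ℝ :=
  ∫ u in Ioi (0:ℝ), Real.exp (-u) * u ^ (s - 1) * Real.log u ^ k

lemma integrable_I {s : ℝ} (hs : 0 < s) (k : ℕ) :
    IntegrableOn (fun u : ℝ => Real.exp (-u) * u ^ (s - 1) * Real.log u ^ k) (Ioi 0) := by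
  refine (integrable_aux (by linarith : (-1:ℝ) < s - 1) k).mono' ?_ ?_
  · apply ContinuousOn.aestronglyMeasurable ?_ measurableSet_Ioi
    apply ContinuousOn.mul
    · exact (continuousOn_id.neg.rexp).mul
        (ContinuousOn.rpow_const continuousOn_id (fun x hx => Or.inl (ne_of_gt hx)))
    · exact (Real.continuousOn_log.mono (fun x hx => ne_of_gt hx)).pow k
  · filter_upwards [ae_restrict_mem measurableSet_Ioi] with u hu
    have hu : (0:ℝ) < u := hu
    rw [Real.norm_eq_abs, abs_mul, abs_pow]
    gcongr
    · exact le_of_eq (abs_of_nonneg (by positivity))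

lemma hasDerivAt_I {s₀ : ℝ} (hs : 0 < s₀) (k : ℕ) : HasDerivAt (I k) (I (k + 1) s₀) s₀ := by
  set ε : ℝ := s₀ / 2 with hε
  have hεpos : 0 < ε := by positivity
  have key := hasDerivAt_integral_of_dominated_loc_of_deriv_le (μ := volume.restrict (Ioi 0))
    (F := fun s u => Real.exp (-u) * u ^ (s - 1) * Real.log u ^ k)
    (F' := fun s u => Real.exp (-u) * u ^ (s - 1) * Real.log u ^ (k + 1))
    (x₀ := s₀)
    (bound := fun u => Real.exp (-u) * u ^ (s₀/2 - 1) * |Real.log u| ^ (k+1)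
      + Real.exp (-u) * u ^ (3*s₀/2 - 1) * |Real.log u| ^ (k+1))
    (Metric.ball_mem_nhds s₀ hεpos) ?_ ?_ ?_ ?_ ?_ ?_
  · exact key.2
  · filter_upwards with s
    apply ContinuousOn.aestronglyMeasurable ?_ measurableSet_Ioi
    apply ContinuousOn.mul
    · exact (continuousOn_id.neg.rexp).mul
        (ContinuousOn.rpow_const continuousOn_id (fun x hx => Or.inl (ne_of_gt hx)))
    · exact (Real.continuousOn_log.mono (fun x hx => ne_of_gt hx)).pow k
  · exact integrable_I hs k
  · apply ContinuousOn.aestronglyMeasurable ?_ measurableSet_Ioi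
    apply ContinuousOn.mul
    · exact (continuousOn_id.neg.rexp).mul
        (ContinuousOn.rpow_const continuousOn_id (fun x hx => Or.inl (ne_of_gt hx)))
    · exact (Real.continuousOn_log.mono (fun x hx => ne_of_gt hx)).pow (k+1)
  · filter_upwards [ae_restrict_mem measurableSet_Ioi] with u hu
    have hu : (0:ℝ) < u := hu
    intro s hsball
    rw [Metric.mem_ball, Real.dist_eq, abs_lt] at hsball
    rw [Real.norm_eq_abs, abs_mul, abs_mul, abs_pow, abs_of_nonneg (Real.exp_pos _).le,
      abs_of_nonneg (Real.rpow_pos_of_pos hu _).le]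
    have hsplit : u ^ (s - 1) ≤ u ^ (s₀/2 - 1) + u ^ (3*s₀/2 - 1) := by
      rcases le_or_gt 1 u with h | h
      · calc u ^ (s - 1) ≤ u ^ (3*s₀/2 - 1) := by
              apply Real.rpow_le_rpow_of_exponent_le h
              simp only [hε] at hsball; linarith [hsball.2]
          _ ≤ u ^ (s₀/2 - 1) + u ^ (3*s₀/2 - 1) := by
              nlinarith [Real.rpow_pos_of_pos hu (s₀/2 - 1)]
      · calc u ^ (s - 1) ≤ u ^ (s₀/2 - 1) := by
              apply Real.rpow_le_rpow_of_exponent_ge hu h.le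
              simp only [hε] at hsball; linarith [hsball.1]
          _ ≤ u ^ (s₀/2 - 1) + u ^ (3*s₀/2 - 1) := by
              nlinarith [Real.rpow_pos_of_pos hu (3*s₀/2 - 1)]
    calc Real.exp (-u) * u ^ (s - 1) * |Real.log u| ^ (k+1)
        ≤ Real.exp (-u) * (u ^ (s₀/2 - 1) + u ^ (3*s₀/2 - 1)) * |Real.log u| ^ (k+1) := by
          gcongr
      _ = Real.exp (-u) * u ^ (s₀/2 - 1) * |Real.log u| ^ (k+1)
          + Real.exp (-u) * u ^ (3*s₀/2 - 1) * |Real.log u| ^ (k+1) := by ring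
  · exact (integrable_aux (by linarith : (-1:ℝ) < s₀/2 - 1) (k+1)).add
      (integrable_aux (by linarith : (-1:ℝ) < 3*s₀/2 - 1) (k+1))
  · filter_upwards [ae_restrict_mem measurableSet_Ioi] with u hu
    have hu : (0:ℝ) < u := hu
    intro s _
    have hrw : (fun t : ℝ => Real.exp (-u) * u ^ (t - 1) * Real.log u ^ k)
        = fun t : ℝ => Real.exp (-u) * Real.exp ((t - 1) * Real.log u) * Real.log u ^ k := by
      funext t; rw [Real.rpow_def_of_pos hu]; ring_nf
    rw [hrw]
    have hinner : HasDerivAt (fun t : ℝ => Real.exp ((t - 1) * Real.log u))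
        (Real.exp ((s - 1) * Real.log u) * Real.log u) s := by
      have h1 : HasDerivAt (fun t : ℝ => (t - 1) * Real.log u) (Real.log u) s := by
        simpa using ((hasDerivAt_id s).sub_const 1).mul_const (Real.log u)
      exact (Real.hasDerivAt_exp _).comp s h1
    have := (hinner.const_mul (Real.exp (-u))).mul_const (Real.log u ^ k)
    refine this.congr_deriv ?_
    rw [Real.rpow_def_of_pos hu]
    ring

lemma I_zero_eq_Gamma {s : ℝ} (hs : 0 < s) : I 0 s = Real.Gamma s := by
  rw [Real.Gamma_eq_integral hs, I]
  simp

lemma hasDerivAt_Gamma_I1 {s : ℝ} (hs : 0 < s) : HasDerivAt Real.Gamma (I 1 s) s := by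
  have h := hasDerivAt_I hs 0
  norm_num at h
  apply h.congr_of_eventuallyEq
  filter_upwards [Ioi_mem_nhds hs] with t ht
  exact (I_zero_eq_Gamma ht).symm

lemma I_one_half :
    I 1 (1/2) = -Real.sqrt π * (Real.eulerMascheroniConstant + 2 * Real.log 2) :=
  (hasDerivAt_Gamma_I1 one_half_pos).unique Real.hasDerivAt_Gamma_one_half

lemma reflection_eq :
    2 * Real.sqrt π * I 2 (1/2) - 2 * I 1 (1/2) * I 1 (1/2) = π ^ 3 := by
  set L1 : ℝ → ℝ := fun s => I 1 s * Real.Gamma (1 - s) - Real.Gamma s * I 1 (1 - s) with hL1def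
  set R1 : ℝ → ℝ := fun s => -(π^2 * Real.cos (π * s)) / (Real.sin (π * s))^2 with hR1def
  have hGamma1s : ∀ s : ℝ, 0 < 1 - s →
      HasDerivAt (fun t => Real.Gamma (1 - t)) (-(I 1 (1 - s))) s := by
    intro s h
    have inner : HasDerivAt (fun t : ℝ => 1 - t) (-1) s := by
      simpa using (hasDerivAt_id s).const_sub 1
    have := (hasDerivAt_Gamma_I1 h).comp s inner
    exact this.congr_deriv (by ring)
  have hI1comp : ∀ s : ℝ, 0 < 1 - s →
      HasDerivAt (fun t => I 1 (1 - t)) (-(I 2 (1 - s))) s := by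
    intro s h
    have inner : HasDerivAt (fun t : ℝ => 1 - t) (-1) s := by
      simpa using (hasDerivAt_id s).const_sub 1
    have h2 := hasDerivAt_I h 1
    norm_num at h2
    have := h2.comp s inner
    exact this.congr_deriv (by ring)
  have hLder : ∀ s ∈ Ioo (0:ℝ) 1,
      HasDerivAt (fun t => Real.Gamma t * Real.Gamma (1 - t)) (L1 s) s := by
    intro s hs
    have := (hasDerivAt_Gamma_I1 hs.1).mul (hGamma1s s (by linarith [hs.2]))
    refine this.congr_deriv ?_
    simp only [hL1def]
    ring
  have hsin : ∀ s : ℝ, HasDerivAt (fun t : ℝ => Real.sin (π * t)) (Real.cos (π * s) * π) s := by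
    intro s
    have inner : HasDerivAt (fun t : ℝ => π * t) π s := by
      simpa using (hasDerivAt_id s).const_mul π
    exact (Real.hasDerivAt_sin (π * s)).comp s inner
  have hne : ∀ s ∈ Ioo (0:ℝ) 1, Real.sin (π * s) ≠ 0 := by
    intro s hs
    have : 0 < Real.sin (π * s) := Real.sin_pos_of_pos_of_lt_pi (mul_pos Real.pi_pos hs.1)
      (by nlinarith [Real.pi_pos, hs.1, hs.2])
    exact this.ne'
  have hRder : ∀ s ∈ Ioo (0:ℝ) 1,
      HasDerivAt (fun t => π / Real.sin (π * t)) (R1 s) s := by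
    intro s hs
    have := (hasDerivAt_const s π).div (hsin s) (hne s hs)
    refine this.congr_deriv ?_
    simp only [hR1def]
    ring
  -- second derivative of L at 1/2
  have h12 : ((1:ℝ) - 1/2) = 1/2 := by norm_num
  have hL1der : HasDerivAt L1
      (2 * Real.sqrt π * I 2 (1/2) - 2 * I 1 (1/2) * I 1 (1/2)) (1/2) := by
    have hI2' := hasDerivAt_I one_half_pos 1
    norm_num at hI2'
    have h1 : HasDerivAt (fun t => I 1 t * Real.Gamma (1 - t))
        (I 2 (1/2) * Real.Gamma (1/2) + I 1 (1/2) * -(I 1 (1/2))) (1/2) := by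
      have := hI2'.mul (hGamma1s (1/2) (by norm_num))
      rwa [h12] at this
    have h2 : HasDerivAt (fun t => Real.Gamma t * I 1 (1 - t))
        (I 1 (1/2) * I 1 (1/2) + Real.Gamma (1/2) * -(I 2 (1/2))) (1/2) := by
      have := (hasDerivAt_Gamma_I1 one_half_pos).mul (hI1comp (1/2) (by norm_num))
      rwa [h12] at this
    have := h1.sub h2
    refine this.congr_deriv ?_
    rw [Real.Gamma_one_half_eq]
    ring
  -- second derivative of R at 1/2
  have hR1der : HasDerivAt R1 (π ^ 3) (1/2) := by
    have hN : ∀ s : ℝ, HasDerivAt (fun t : ℝ => -(π^2 * Real.cos (π * t)))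
        (π^3 * Real.sin (π * s)) s := by
      intro s
      have inner : HasDerivAt (fun t : ℝ => π * t) π s := by
        simpa using (hasDerivAt_id s).const_mul π
      have hcos := (Real.hasDerivAt_cos (π * s)).comp s inner
      have := (hcos.const_mul (π^2)).neg
      refine this.congr_deriv ?_
      ring
    have hD : HasDerivAt (fun t : ℝ => (Real.sin (π * t))^2)
        (2 * Real.sin (π * (1/2:ℝ)) * (Real.cos (π * (1/2:ℝ)) * π)) (1/2) := by
      have := (hsin (1/2)).pow 2
      refine this.congr_deriv ?_
      ring
    have hpihalf : π * (1/2:ℝ) = π / 2 := by ring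
    have hsinv : Real.sin (π * (1/2:ℝ)) = 1 := by rw [hpihalf, Real.sin_pi_div_two]
    have hcosv : Real.cos (π * (1/2:ℝ)) = 0 := by rw [hpihalf, Real.cos_pi_div_two]
    have hne2 : (Real.sin (π * (1/2:ℝ)))^2 ≠ 0 := by rw [hsinv]; norm_num
    have := (hN (1/2)).div hD hne2
    rw [hR1def]
    refine this.congr_deriv ?_
    rw [hsinv, hcosv]
    ring
  -- L1 and R1 agree near 1/2
  have hev : L1 =ᶠ[𝓝 (1/2 : ℝ)] R1 := by
    filter_upwards [Ioo_mem_nhds (by norm_num : (0:ℝ) < 1/2) (by norm_num : (1/2:ℝ) < 1)]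
      with s hs
    have e1 : deriv (fun t => Real.Gamma t * Real.Gamma (1 - t)) s = L1 s := (hLder s hs).deriv
    have e2 : deriv (fun t => π / Real.sin (π * t)) s = R1 s := (hRder s hs).deriv
    rw [← e1, ← e2]
    congr 1
    funext t
    exact Real.Gamma_mul_Gamma_one_sub t
  exact (hL1der.congr_of_eventuallyEq hev.symm).unique hR1der

lemma I_two_half :
    I 2 (1/2) = Real.sqrt π *
      ((Real.eulerMascheroniConstant + 2 * Real.log 2)^2 + π^2 / 2) := by
  have h := reflection_eq
  rw [I_one_half] at h
  have hsq : Real.sqrt π * Real.sqrt π = π := Real.mul_self_sqrt Real.pi_pos.le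
  have hpos : 0 < Real.sqrt π := Real.sqrt_pos.mpr Real.pi_pos
  set c := Real.eulerMascheroniConstant + 2 * Real.log 2
  nlinarith [hsq, hpos, sq_nonneg (Real.sqrt π)]


local notation "γ'" => Real.eulerMascheroniConstant

lemma subst (G : ℝ → ℝ) :
    ∫ u in Ioi (0:ℝ), G u
      = ∫ x : ℝ, |π / Real.sqrt 2 * (Real.exp (π * x / Real.sqrt 2 - γ') / 4)|
          * G (Real.exp (π * x / Real.sqrt 2 - γ') / 4) := by
  set φ : ℝ → ℝ := fun x => Real.exp (π * x / Real.sqrt 2 - γ') / 4 with hφ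
  have hs2 : (0:ℝ) < Real.sqrt 2 := Real.sqrt_pos.mpr (by norm_num)
  have hπs2 : π / Real.sqrt 2 ≠ 0 := by positivity
  have hderiv : ∀ x ∈ (univ : Set ℝ),
      HasDerivWithinAt φ (π / Real.sqrt 2 * (Real.exp (π * x / Real.sqrt 2 - γ') / 4)) univ x := by
    intro x _
    have inner : HasDerivAt (fun t : ℝ => π * t / Real.sqrt 2 - γ') (π / Real.sqrt 2) x := by
      have := (((hasDerivAt_id x).const_mul π).div_const (Real.sqrt 2)).sub_const γ'
      simpa using this
    have := ((Real.hasDerivAt_exp _).comp x inner).div_const 4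
    have h2 : Real.exp (π * x / Real.sqrt 2 - γ') * (π / Real.sqrt 2) / 4
        = π / Real.sqrt 2 * (Real.exp (π * x / Real.sqrt 2 - γ') / 4) := by ring
    rw [h2] at this
    exact this.hasDerivWithinAt
  have hinj : InjOn φ univ := by
    intro a _ b _ h
    simp only [hφ] at h
    have h2 : π * a / Real.sqrt 2 - γ' = π * b / Real.sqrt 2 - γ' := Real.exp_injective (by linarith)
    have h3 : π / Real.sqrt 2 * a = π / Real.sqrt 2 * b := by
      rw [div_mul_eq_mul_div, div_mul_eq_mul_div]; linarith [h2]
    exact mul_left_cancel₀ hπs2 h3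
  have himg : φ '' univ = Ioi 0 := by
    ext u
    simp only [image_univ, mem_range, mem_Ioi, hφ]
    constructor
    · rintro ⟨x, rfl⟩; positivity
    · intro hu
      refine ⟨Real.sqrt 2 * (Real.log (4 * u) + γ') / π, ?_⟩
      have harg : π * (Real.sqrt 2 * (Real.log (4 * u) + γ') / π) / Real.sqrt 2 - γ'
          = Real.log (4 * u) := by
        field_simp
        ring
      rw [harg, Real.exp_log (by linarith)]
      ring
  have := integral_image_eq_integral_abs_deriv_smul MeasurableSet.univ hderiv hinj G
  rw [himg] at this
  rw [this, setIntegral_univ]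
  simp [smul_eq_mul]
  rfl

lemma pointwise (k : ℕ) (x : ℝ) :
    |π / Real.sqrt 2 * (Real.exp (π * x / Real.sqrt 2 - γ') / 4)|
      * ((1 / Real.sqrt π)
          * (Real.exp (-(Real.exp (π * x / Real.sqrt 2 - γ') / 4))
              * (Real.exp (π * x / Real.sqrt 2 - γ') / 4) ^ ((1:ℝ)/2 - 1))
          * ((Real.sqrt 2 / π)
              * (Real.log (Real.exp (π * x / Real.sqrt 2 - γ') / 4) + (γ' + 2 * Real.log 2))) ^ k)
    = x ^ k * ((1 / 2) * Real.sqrt (π / 2)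
        * Real.exp (-(1 / 4) * Real.exp (π * x / Real.sqrt 2 - γ')
            + (π * x / Real.sqrt 2 - γ') / 2)) := by
  set z : ℝ := π * x / Real.sqrt 2 - γ' with hz
  clear_value z
  have hs2 : (0:ℝ) < Real.sqrt 2 := Real.sqrt_pos.mpr (by norm_num)
  have hs2sq : Real.sqrt 2 * Real.sqrt 2 = 2 := Real.mul_self_sqrt (by norm_num)
  have hsπ : (0:ℝ) < Real.sqrt π := Real.sqrt_pos.mpr Real.pi_pos
  have hsπsq : Real.sqrt π * Real.sqrt π = π := Real.mul_self_sqrt Real.pi_pos.le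
  have hlog4 : Real.log 4 = 2 * Real.log 2 := by
    rw [show (4:ℝ) = 2^2 by norm_num, Real.log_pow]; norm_num
  -- the log factor equals x
  have hX : Real.sqrt 2 / π * (Real.log (Real.exp z / 4) + (γ' + 2 * Real.log 2)) = x := by
    rw [Real.log_div (Real.exp_ne_zero z) (by norm_num), Real.log_exp, hlog4, hz]
    field_simp
    ring
  -- the rpow factor
  have hrpow : (Real.exp z / 4) ^ ((1:ℝ)/2 - 1) = 2 * Real.exp (-z/2) := by
    have hE4 : Real.exp z / 4 = Real.exp (z - Real.log 4) := by
      rw [Real.exp_sub, Real.exp_log (by norm_num : (0:ℝ) < 4)]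
    rw [hE4, Real.rpow_def_of_pos (Real.exp_pos _), Real.log_exp, hlog4,
      show (z - 2 * Real.log 2) * ((1:ℝ)/2 - 1) = Real.log 2 + (-z/2) by ring,
      Real.exp_add, Real.exp_log (by norm_num : (0:ℝ) < 2)]
  -- abs of positive
  have habs : |π / Real.sqrt 2 * (Real.exp z / 4)| = π / Real.sqrt 2 * (Real.exp z / 4) := by
    rw [abs_of_pos]; positivity
  rw [habs, hX, hrpow]
  have hsqrtdiv : Real.sqrt (π / 2) = Real.sqrt π / Real.sqrt 2 := Real.sqrt_div Real.pi_pos.le 2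
  rw [hsqrtdiv]
  have hexp1 : Real.exp (-(1/4) * Real.exp z + z/2)
      = Real.exp (-(Real.exp z / 4)) * Real.exp (z/2) := by
    rw [← Real.exp_add]; ring_nf
  have hexp2 : Real.exp z * Real.exp (-z/2) = Real.exp (z/2) := by
    rw [← Real.exp_add]; ring_nf
  rw [hexp1]
  set sπ := Real.sqrt π with hsπdef
  clear_value sπ
  field_simp
  rw [← hexp2, ← hsπsq]
  ring

lemma moment_zero :
    ∫ u in Ioi (0:ℝ), (1 / Real.sqrt π) * (Real.exp (-u) * u ^ ((1:ℝ)/2 - 1))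
      * ((Real.sqrt 2 / π) * (Real.log u + (γ' + 2 * Real.log 2))) ^ 0 = 1 := by
  have h1 : ∀ u : ℝ, (1 / Real.sqrt π) * (Real.exp (-u) * u ^ ((1:ℝ)/2 - 1))
      * ((Real.sqrt 2 / π) * (Real.log u + (γ' + 2 * Real.log 2))) ^ 0
      = (1 / Real.sqrt π) * (Real.exp (-u) * u ^ ((1:ℝ)/2 - 1) * Real.log u ^ 0) := by
    intro u; simp only [pow_zero]; ring
  simp only [h1]
  rw [MeasureTheory.integral_const_mul]
  have : (∫ u in Ioi (0:ℝ), Real.exp (-u) * u ^ ((1:ℝ)/2 - 1) * Real.log u ^ 0) = I 0 (1/2) := by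
    rw [I]
  rw [this, I_zero_eq_Gamma one_half_pos, Real.Gamma_one_half_eq]
  have hsπ : (0:ℝ) < Real.sqrt π := Real.sqrt_pos.mpr Real.pi_pos
  field_simp

lemma moment_one :
    ∫ u in Ioi (0:ℝ), (1 / Real.sqrt π) * (Real.exp (-u) * u ^ ((1:ℝ)/2 - 1))
      * ((Real.sqrt 2 / π) * (Real.log u + (γ' + 2 * Real.log 2))) ^ 1 = 0 := by
  set c : ℝ := γ' + 2 * Real.log 2 with hc
  set A : ℝ := (1 / Real.sqrt π) * (Real.sqrt 2 / π) with hA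
  have h1 : ∀ u : ℝ, (1 / Real.sqrt π) * (Real.exp (-u) * u ^ ((1:ℝ)/2 - 1))
      * ((Real.sqrt 2 / π) * (Real.log u + c)) ^ 1
      = A * (Real.exp (-u) * u ^ ((1:ℝ)/2 - 1) * Real.log u ^ 1)
        + (A * c) * (Real.exp (-u) * u ^ ((1:ℝ)/2 - 1) * Real.log u ^ 0) := by
    intro u; simp only [hA, pow_one, pow_zero]; ring
  simp only [h1]
  rw [MeasureTheory.integral_add (((integrable_I one_half_pos 1).const_mul A))
    (((integrable_I one_half_pos 0).const_mul (A * c))),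
    MeasureTheory.integral_const_mul, MeasureTheory.integral_const_mul]
  have e1 : (∫ u in Ioi (0:ℝ), Real.exp (-u) * u ^ ((1:ℝ)/2 - 1) * Real.log u ^ 1) = I 1 (1/2) := by
    rw [I]
  have e0 : (∫ u in Ioi (0:ℝ), Real.exp (-u) * u ^ ((1:ℝ)/2 - 1) * Real.log u ^ 0) = I 0 (1/2) := by
    rw [I]
  rw [e1, e0, I_one_half, I_zero_eq_Gamma one_half_pos, Real.Gamma_one_half_eq, hc]
  ring

lemma moment_two :
    ∫ u in Ioi (0:ℝ), (1 / Real.sqrt π) * (Real.exp (-u) * u ^ ((1:ℝ)/2 - 1))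
      * ((Real.sqrt 2 / π) * (Real.log u + (γ' + 2 * Real.log 2))) ^ 2 = 1 := by
  set c : ℝ := γ' + 2 * Real.log 2 with hc
  set A : ℝ := (1 / Real.sqrt π) * (Real.sqrt 2 / π) ^ 2 with hA
  have h1 : ∀ u : ℝ, (1 / Real.sqrt π) * (Real.exp (-u) * u ^ ((1:ℝ)/2 - 1))
      * ((Real.sqrt 2 / π) * (Real.log u + c)) ^ 2
      = A * (Real.exp (-u) * u ^ ((1:ℝ)/2 - 1) * Real.log u ^ 2)
        + ((A * (2 * c)) * (Real.exp (-u) * u ^ ((1:ℝ)/2 - 1) * Real.log u ^ 1)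
          + (A * c ^ 2) * (Real.exp (-u) * u ^ ((1:ℝ)/2 - 1) * Real.log u ^ 0)) := by
    intro u; simp only [hA, pow_zero]; ring
  simp only [h1]
  have int2 : Integrable (fun u : ℝ => A * (Real.exp (-u) * u ^ ((1:ℝ)/2 - 1) * Real.log u ^ 2))
      (volume.restrict (Ioi 0)) := (integrable_I one_half_pos 2).const_mul A
  have int1 : Integrable (fun u : ℝ => A * (2 * c) * (Real.exp (-u) * u ^ ((1:ℝ)/2 - 1) * Real.log u ^ 1))
      (volume.restrict (Ioi 0)) := (integrable_I one_half_pos 1).const_mul (A * (2 * c))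
  have int0 : Integrable (fun u : ℝ => A * c ^ 2 * (Real.exp (-u) * u ^ ((1:ℝ)/2 - 1) * Real.log u ^ 0))
      (volume.restrict (Ioi 0)) := (integrable_I one_half_pos 0).const_mul (A * c ^ 2)
  have int10 : Integrable (fun u : ℝ =>
      A * (2 * c) * (Real.exp (-u) * u ^ ((1:ℝ)/2 - 1) * Real.log u ^ 1)
      + A * c ^ 2 * (Real.exp (-u) * u ^ ((1:ℝ)/2 - 1) * Real.log u ^ 0))
      (volume.restrict (Ioi 0)) := int1.add int0
  rw [MeasureTheory.integral_add int2 int10, MeasureTheory.integral_add int1 int0,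
    MeasureTheory.integral_const_mul, MeasureTheory.integral_const_mul,
    MeasureTheory.integral_const_mul]
  have e2 : (∫ u in Ioi (0:ℝ), Real.exp (-u) * u ^ ((1:ℝ)/2 - 1) * Real.log u ^ 2) = I 2 (1/2) := by
    rw [I]
  have e1 : (∫ u in Ioi (0:ℝ), Real.exp (-u) * u ^ ((1:ℝ)/2 - 1) * Real.log u ^ 1) = I 1 (1/2) := by
    rw [I]
  have e0 : (∫ u in Ioi (0:ℝ), Real.exp (-u) * u ^ ((1:ℝ)/2 - 1) * Real.log u ^ 0) = I 0 (1/2) := by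
    rw [I]
  rw [e2, e1, e0, I_two_half, I_one_half, I_zero_eq_Gamma one_half_pos,
    Real.Gamma_one_half_eq, ← hc]
  have hsπ : (0:ℝ) < Real.sqrt π := Real.sqrt_pos.mpr Real.pi_pos
  have hsπsq : Real.sqrt π * Real.sqrt π = π := Real.mul_self_sqrt Real.pi_pos.le
  have hs2sq : Real.sqrt 2 * Real.sqrt 2 = 2 := Real.mul_self_sqrt (by norm_num)
  rw [hA]
  field_simp
  nlinarith [hsπsq, hs2sq, Real.pi_pos, sq_nonneg c]

lemma main_component (k : ℕ) :
    (∫ x : ℝ, x ^ k * ((1 / 2) * Real.sqrt (π / 2)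
        * Real.exp (-(1 / 4) * Real.exp (π * x / Real.sqrt 2 - γ')
          + (π * x / Real.sqrt 2 - γ') / 2)))
      = ∫ u in Ioi (0:ℝ), (1 / Real.sqrt π) * (Real.exp (-u) * u ^ ((1:ℝ)/2 - 1))
          * ((Real.sqrt 2 / π) * (Real.log u + (γ' + 2 * Real.log 2))) ^ k := by
  rw [subst (fun u => (1 / Real.sqrt π) * (Real.exp (-u) * u ^ ((1:ℝ)/2 - 1))
      * ((Real.sqrt 2 / π) * (Real.log u + (γ' + 2 * Real.log 2))) ^ k)]
  congr 1
  funext x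
  exact (pointwise k x).symm

end GumbelAux

open GumbelAux in
/-- The doubly exponential density `g(x) = (1/2)√(π/2) exp(-(1/4)e^z + z/2)`,
`z = πx/√2 - γ`, is a probability density with mean `0` and variance `1`. -/
theorem gumbel_density_moments :
    (∫ x : ℝ, (1 / 2) * Real.sqrt (Real.pi / 2)
        * Real.exp (-(1 / 4) * Real.exp (Real.pi * x / Real.sqrt 2
            - Real.eulerMascheroniConstant)
          + (Real.pi * x / Real.sqrt 2 - Real.eulerMascheroniConstant) / 2) = 1)
    ∧ (∫ x : ℝ, x * ((1 / 2) * Real.sqrt (Real.pi / 2)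
        * Real.exp (-(1 / 4) * Real.exp (Real.pi * x / Real.sqrt 2
            - Real.eulerMascheroniConstant)
          + (Real.pi * x / Real.sqrt 2 - Real.eulerMascheroniConstant) / 2)) = 0)
    ∧ (∫ x : ℝ, x ^ 2 * ((1 / 2) * Real.sqrt (Real.pi / 2)
        * Real.exp (-(1 / 4) * Real.exp (Real.pi * x / Real.sqrt 2
            - Real.eulerMascheroniConstant)
          + (Real.pi * x / Real.sqrt 2 - Real.eulerMascheroniConstant) / 2)) = 1) := by
  refine ⟨?_, ?_, ?_⟩
  · have h := (main_component 0).trans moment_zero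
    simpa using h
  · have h := (main_component 1).trans moment_one
    simpa using h
  · exact (main_component 2).trans moment_two
end
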